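/- arXiv:math/0512019 — 6 statements merged into one kernel-verified Lean document; each statement's English description precedes it below -/
import Mathlib

section
/- Let F be a finite family of nonempty sets with 2-colorability defect cd_2(F) = r. Then any proper coloring of the general Kneser graph KG(F) with colors 1,...,m contains a completely multicolored complete bipartite subgraph K_{⌈r/2⌉,⌊r/2⌋} whose r distinct colors alternate between the two sides with respect to their natural order (i.e., there exist colors i_1 < i_2 < ... < i_r such that the vertices colored i_j with j odd form one side and those with j even form the other side). -/
open Finset

/-- The general Kneser graph of a finite set system: vertices are the members
of the family, two sets adjacent iff they are disjoint (and distinct). -/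
def kneserGraph {α : Type*} [DecidableEq α] (𝓕 : Finset (Finset α)) :
    SimpleGraph {F // F ∈ 𝓕} where
  Adj A B := A ≠ B ∧ Disjoint (A : Finset α) (B : Finset α)
  symm := by
    constructor
    intro A B hAB
    exact ⟨hAB.1.symm, hAB.2.symm⟩
  loopless := ⟨fun A hA => hA.1 rfl⟩

/-- The 2-colorability defect of a finite set system: the minimum number of
points to delete so that the sets avoiding the deleted points can be 2-colored
with no set monochromatic. -/
noncomputable def cdTwo {α : Type*} [DecidableEq α] (𝓕 : Finset (Finset α)) : ℕ :=
  sInf {k | ∃ Y : Finset α, Y.card = k ∧ ∃ c : α → Fin 2,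
    ∀ F ∈ 𝓕, Disjoint F Y → (∃ a ∈ F, c a = 0) ∧ (∃ b ∈ F, c b = 1)}

namespace KZ

def AltA : Bool → List ℤ → Prop
  | _, [] => True
  | b, a :: t => (if b then 0 < a else a < 0) ∧ (∀ c ∈ t, |a| < |c|) ∧ AltA (!b) t

lemma altA_nil (b : Bool) : AltA b [] := trivial

lemma altA_cons {b : Bool} {a : ℤ} {t : List ℤ} :
    AltA b (a :: t) ↔ (if b then 0 < a else a < 0) ∧ (∀ c ∈ t, |a| < |c|) ∧ AltA (!b) t :=
  Iff.rfl

lemma head_ne {b : Bool} {a : ℤ} (h1 : if b then 0 < a else a < 0) : a ≠ 0 := by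
  cases b <;> simp at h1 <;> omega

lemma head_signs {b : Bool} {a a' : ℤ} (h1 : if b then 0 < a else a < 0)
    (h1' : if !b then 0 < a' else a' < 0) : a' < 0 ↔ 0 < a := by
  cases b <;> simp at h1 h1' <;> omega

lemma AltA.pairwise : ∀ {l : List ℤ} {b : Bool}, AltA b l →
    l.Pairwise (fun x y => |x| < |y|)
  | [], _, _ => List.Pairwise.nil
  | a :: t, b, h => by
    rcases h with ⟨_, h2, h3⟩
    exact List.Pairwise.cons h2 h3.pairwise

lemma AltA.nonzero : ∀ {l : List ℤ} {b : Bool}, AltA b l → ∀ x ∈ l, x ≠ 0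
  | [], _, _ => by intro x hx; simp at hx
  | a :: t, b, h => by
    rcases h with ⟨h1, -, h3⟩
    intro x hx
    rcases List.mem_cons.1 hx with rfl | hx
    · exact head_ne h1
    · exact h3.nonzero x hx

lemma AltA.excl : ∀ {l : List ℤ} {b : Bool}, AltA b l → AltA (!b) l → l = []
  | [], _, _, _ => rfl
  | a :: t, b, h, h' => by
    rcases h with ⟨h1, -, -⟩
    rcases h' with ⟨h1', -, -⟩
    cases b <;> simp at h1 h1' <;> omega

lemma altA_map_neg : ∀ {l : List ℤ} {b : Bool},
    AltA b (l.map (fun x => -x)) ↔ AltA (!b) l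
  | [], b => ⟨fun _ => trivial, fun _ => trivial⟩
  | a :: t, b => by
    simp only [List.map_cons, altA_cons, Bool.not_not]
    constructor
    · rintro ⟨h1, h2, h3⟩
      refine ⟨?_, ?_, ?_⟩
      · cases b <;> simp at h1 ⊢ <;> omega
      · intro c hc
        have := h2 (-c) (List.mem_map.2 ⟨c, hc, rfl⟩)
        simpa using this
      · have : AltA (!(!b)) t := altA_map_neg.1 h3
        simpa using this
    · rintro ⟨h1, h2, h3⟩
      refine ⟨?_, ?_, ?_⟩
      · cases b <;> simp at h1 ⊢ <;> omega
      · intro c hc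
        rcases List.mem_map.1 hc with ⟨d, hd, rfl⟩
        simpa using h2 d hd
      · exact altA_map_neg.2 (by simpa using h3)

lemma AltA.sign_get : ∀ {l : List ℤ} {b : Bool}, AltA b l →
    ∀ p (h : p < l.length), 0 < (cond b 1 (-1) : ℤ) * (-1) ^ p * l.get ⟨p, h⟩
  | [], _, _ => by intro p hp; simp at hp
  | a :: t, b, h => by
    rcases h with ⟨h1, -, h3⟩
    intro p hp
    cases p with
    | zero =>
      simp only [pow_zero, mul_one, List.get]
      cases b <;> simp at h1 ⊢ <;> omega
    | succ p =>
      have hp' : p < t.length := by simpa using hp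
      have := h3.sign_get p hp'
      have hco : (cond b 1 (-1) : ℤ) * (-1) ^ (p + 1) = cond (!b) 1 (-1) * (-1) ^ p := by
        cases b <;> simp [pow_succ] <;> ring
      show 0 < (cond b 1 (-1) : ℤ) * (-1) ^ (p+1) * t.get ⟨p, hp'⟩
      rw [hco]; exact this

lemma AltA.abs_get_gt : ∀ {l : List ℤ} {b : Bool}, AltA b l →
    ∀ p (h : p < l.length), (p : ℤ) < |l.get ⟨p, h⟩| := by
  intro l b h p
  induction p with
  | zero =>
    intro hp
    have := abs_pos.2 (h.nonzero (l.get ⟨0, hp⟩) (l.get_mem _))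
    simpa using this
  | succ p ih =>
    intro hp
    have hp' : p < l.length := Nat.lt_of_succ_lt hp
    have h1 := ih hp'
    have h2 : |l.get ⟨p, hp'⟩| < |l.get ⟨p + 1, hp⟩| := by
      have := List.pairwise_iff_get.1 h.pairwise ⟨p, hp'⟩ ⟨p + 1, hp⟩ (by simp)
      exact this
    push_cast
    omega


attribute [local instance] Classical.propDecidable

noncomputable section

/-- `aAlt b M` : the multiset `M` can be arranged into an alternating list. -/
def aAlt (b : Bool) (M : Multiset ℤ) : Prop := ∃ l : List ℤ, AltA b l ∧ (l : Multiset ℤ) = M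

abbrev rabs : ℤ → ℤ → Prop := fun x y => |x| < |y|

instance : IsAntisymm ℤ rabs := ⟨fun a b h1 h2 => absurd h2 (not_lt.2 h1.le)⟩

/-- A sorted representative of a multiset satisfying `aAlt` is alternating. -/
lemma aAlt_canon {b : Bool} {M : Multiset ℤ} (h : aAlt b M) {l : List ℤ}
    (hM : (l : Multiset ℤ) = M) (hs : l.Pairwise rabs) : AltA b l := by
  rcases h with ⟨l', h1, h2⟩
  have hperm : l'.Perm l := Multiset.coe_eq_coe.1 (h2.trans hM.symm)
  have : l' = l := List.Perm.eq_of_pairwise' h1.pairwise hs hperm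
  rwa [this] at h1

lemma aAlt_excl {b : Bool} {M : Multiset ℤ} (h : aAlt b M) (h' : aAlt (!b) M) : M = 0 := by
  rcases h with ⟨l, h1, h2⟩
  have h1' : AltA (!b) l := aAlt_canon h' h2 h1.pairwise
  have := h1.excl h1'
  subst this; simpa using h2.symm

lemma aAlt_map_neg {b : Bool} {M : Multiset ℤ} :
    aAlt b (M.map (fun x => -x)) ↔ aAlt (!b) M := by
  constructor
  · rintro ⟨l, h1, h2⟩
    refine ⟨l.map (fun x => -x), altA_map_neg.2 (by simpa using h1), ?_⟩
    have : (M.map (fun x => -x)).map (fun x => -x) = M := by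
      rw [Multiset.map_map]; simp
    rw [← this, ← h2]; simp
  · rintro ⟨l, h1, h2⟩
    exact ⟨l.map (fun x => -x), altA_map_neg.2 (by simpa using h1), by rw [← h2]; simp⟩

/-- number of deletion positions of `s` leaving an alternating list -/
def DcountL (b : Bool) (s : List ℤ) : ℕ :=
  ((Finset.range s.length).filter (fun p => AltA b (s.eraseIdx p))).card

lemma dcount_cons (b : Bool) (a : ℤ) (t : List ℤ) (hs : (a :: t).Pairwise rabs) :
    DcountL b (a :: t) =
      (if (if b then 0 < a else a < 0) then DcountL (!b) t else 0) +
        (if AltA b t then 1 else 0) := by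
  classical
  unfold DcountL
  rw [Finset.card_filter, List.length_cons, Finset.sum_range_succ']
  congr 1
  · have : ∀ p ∈ Finset.range t.length,
        (if AltA b ((a :: t).eraseIdx (p + 1)) then (1:ℕ) else 0)
          = (if (if b then 0 < a else a < 0) then (if AltA (!b) (t.eraseIdx p) then (1:ℕ) else 0) else 0) := by
      intro p hp
      have herase : (a :: t).eraseIdx (p + 1) = a :: t.eraseIdx p := rfl
      rw [herase]
      have hmid : ∀ c ∈ t.eraseIdx p, |a| < |c| := by
        intro c hc
        have hc' : c ∈ t := (List.eraseIdx_sublist t p).mem hc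
        exact (List.pairwise_cons.1 hs).1 c hc'
      by_cases hb : if b then 0 < a else a < 0
      · simp only [if_pos hb]
        have : AltA b (a :: t.eraseIdx p) ↔ AltA (!b) (t.eraseIdx p) := by
          rw [altA_cons]
          exact ⟨fun h => h.2.2, fun h => ⟨hb, hmid, h⟩⟩
        simp [this]
      · have : ¬ AltA b (a :: t.eraseIdx p) := fun h => hb (altA_cons.1 h).1
        simp [this, hb]
    rw [Finset.sum_congr rfl this]
    by_cases hb : if b then 0 < a else a < 0
    · simp only [if_pos hb, Finset.card_filter]
    · simp [hb]

/-- Core parity lemma. -/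
lemma dcount_parity : ∀ (s : List ℤ), s ≠ [] → s.Pairwise rabs → (0:ℤ) ∉ s →
    ∀ b, (Odd (DcountL b s) ↔ (AltA b s ∨ AltA (!b) s))
  | [], h, _, _ => absurd rfl h
  | a :: t, _, hs, h0 => by
    intro b
    have ha0 : a ≠ 0 := fun h => h0 (by simp [h])
    have hst : t.Pairwise rabs := (List.pairwise_cons.1 hs).2
    have h0t : (0:ℤ) ∉ t := fun h => h0 (List.mem_cons_of_mem _ h)
    rw [dcount_cons b a t hs]
    by_cases hb : if b then 0 < a else a < 0
    · -- head sign matches phase b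
      have hb' : ¬ (if !b then 0 < a else a < 0) := by
        cases b <;> simp_all <;> omega
      have hgoal : (AltA b (a :: t) ∨ AltA (!b) (a :: t)) ↔ AltA (!b) t := by
        constructor
        · rintro (h | h)
          · exact (altA_cons.1 h).2.2
          · exact absurd (altA_cons.1 h).1 hb'
        · intro h
          exact Or.inl (altA_cons.2 ⟨hb, (List.pairwise_cons.1 hs).1, h⟩)
      rw [hgoal, if_pos hb]
      rcases eq_or_ne t [] with rfl | ht
      · simp [DcountL, AltA]
      · have IH := dcount_parity t ht hst h0t (!b)
        simp only [Bool.not_not] at IH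
        have hexcl : ¬ (AltA b t ∧ AltA (!b) t) := by
          rintro ⟨h1, h2⟩; exact ht (h1.excl h2)
        by_cases h2 : AltA (!b) t
        · have h1 : ¬ AltA b t := fun h1 => hexcl ⟨h1, h2⟩
          have hD : Odd (DcountL (!b) t) := IH.2 (Or.inl h2)
          simpa [h1, h2] using hD
        · by_cases h1 : AltA b t
          · have hD : Odd (DcountL (!b) t) := IH.2 (Or.inr h1)
            rw [Nat.odd_iff] at hD ⊢
            simp [h1, h2, Nat.add_mod, hD]
          · have hD : ¬ Odd (DcountL (!b) t) := fun h => by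
              rcases IH.1 h with h | h
              · exact h2 h
              · exact h1 h
            rw [Nat.odd_iff] at hD ⊢
            simp [h1, h2]
            omega
    · -- head sign does not match phase b
      have hb' : (if !b then 0 < a else a < 0) := by
        cases b <;> simp_all <;> omega
      have hgoal : (AltA b (a :: t) ∨ AltA (!b) (a :: t)) ↔ AltA b t := by
        constructor
        · rintro (h | h)
          · exact absurd (altA_cons.1 h).1 hb
          · have := (altA_cons.1 h).2.2
            simpa using this
        · intro h
          refine Or.inr (altA_cons.2 ⟨hb', (List.pairwise_cons.1 hs).1, by simpa using h⟩)
      rw [hgoal, if_neg hb]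
      by_cases h1 : AltA b t <;> simp [h1, Nat.odd_iff]



-- stage 3 proper
/-- the number of single-element deletions from `M` (counted with multiplicity)
that leave a multiset arrangeable as a positively-starting alternating list -/
def delCount (M : Multiset ℤ) : ℕ :=
  (M.map (fun v => if aAlt true (M.erase v) then 1 else 0)).sum

lemma aAlt_nodup {b : Bool} {M : Multiset ℤ} (h : aAlt b M) : M.Nodup := by
  rcases h with ⟨l, h1, h2⟩
  rw [← h2, Multiset.coe_nodup]
  exact h1.pairwise.imp (fun {x y} hxy => fun he => by rw [he] at hxy; exact lt_irrefl _ hxy)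

lemma sum_map_ite_eq (M : Multiset ℤ) (v : ℤ) (c : ℕ) :
    (M.map (fun w => if w = v then c else 0)).sum = M.count v * c := by
  induction M using Multiset.induction_on with
  | empty => simp
  | cons a M ih =>
    rw [Multiset.map_cons, Multiset.sum_cons, ih, Multiset.count_cons]
    by_cases h : a = v
    · simp [h]; ring
    · simp [h, Ne.symm h]

lemma list_sum_map_eq (f : ℤ → ℕ) : ∀ s : List ℤ,
    (s.map f).sum = ∑ p ∈ Finset.range s.length, f (s.getD p 0)
  | [] => by simp
  | a :: t => by
    rw [List.map_cons, List.sum_cons, List.length_cons, Finset.sum_range_succ',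
      list_sum_map_eq f t]
    simp [Nat.add_comm]

/-- The degree lemma: deleting one entry (counted with multiplicity) leaves an
alternating arrangement an odd number of times iff `M` itself is alternating. -/
lemma degree_lemma {M : Multiset ℤ} (hM : M ≠ 0) (hneg : ∀ x ∈ M, -x ∉ M) :
    (Odd (delCount M) ↔ (aAlt true M ∨ aAlt false M)) := by
  have h0 : (0:ℤ) ∉ M := fun h => hneg 0 h (by simpa using h)
  by_cases hnd : M.Nodup
  · -- build the sorted representative
    set K : ℤ → ℤ := fun x => 2 * |x| + (if 0 < x then 0 else 1) with hK
    set r : ℤ → ℤ → Prop := fun x y => K x ≤ K y with hr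
    haveI : DecidableRel r := fun _ _ => Classical.propDecidable _
    haveI htr : IsTrans ℤ r := ⟨fun a b c h1 h2 => le_trans h1 h2⟩
    haveI hto : IsTotal ℤ r := ⟨fun a b => le_total _ _⟩
    haveI han : IsAntisymm ℤ r := by
      constructor
      intro a b h1 h2
      have hab : K a = K b := le_antisymm h1 h2
      simp only [hK] at hab
      rcases abs_cases a with ⟨ha, _⟩ | ⟨ha, _⟩ <;> rcases abs_cases b with ⟨hb, _⟩ | ⟨hb, _⟩ <;>
        split_ifs at hab <;> omega
    set s : List ℤ := M.sort r with hs
    have hsM : (s : Multiset ℤ) = M := M.sort_eq r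
    have hsnd : s.Nodup := by
      have h' := hnd; rw [← hsM] at h'; exact Multiset.coe_nodup.1 h'
    have hsort : s.Pairwise rabs := by
      have h1 : s.Pairwise r := M.pairwise_sort r
      refine List.Pairwise.imp_of_mem ?_ (h1.and hsnd)
      rintro x y hx hy ⟨hxy, hne⟩
      have hxM : x ∈ M := by rw [← hsM]; exact Multiset.mem_coe.2 hx
      have hyM : y ∈ M := by rw [← hsM]; exact Multiset.mem_coe.2 hy
      have habs : |x| ≤ |y| := by
        simp only [hr, hK] at hxy; split_ifs at hxy <;> omega
      rcases lt_or_eq_of_le habs with h | h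
      · exact h
      · exfalso
        have : x = y ∨ x = -y := by
          rcases abs_cases x with ⟨hx', _⟩ | ⟨hx', _⟩ <;> rcases abs_cases y with ⟨hy', _⟩ | ⟨hy', _⟩ <;>
            omega
        rcases this with rfl | rfl
        · exact hne rfl
        · exact hneg y hyM (by simpa using hxM)
    have hsne : s ≠ [] := by
      intro h; apply hM; rw [← hsM, h]; rfl
    have h0s : (0:ℤ) ∉ s := fun h => h0 (by rw [← hsM]; exact Multiset.mem_coe.2 h)
    -- identify delCount with DcountL
    have hdc : delCount M = DcountL true s := by
      unfold delCount DcountL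
      rw [← hsM, Multiset.map_coe, Multiset.sum_coe,
        list_sum_map_eq (fun v => if aAlt true ((s : Multiset ℤ).erase v) then 1 else 0) s,
        Finset.card_filter]
      refine Finset.sum_congr rfl ?_
      intro p hp
      have hp' : p < s.length := Finset.mem_range.1 hp
      have hget : s.getD p 0 = s.get ⟨p, hp'⟩ := List.getD_eq_getElem s 0 hp'
      rw [hget]
      have herase : (s : Multiset ℤ).erase (s.get ⟨p, hp'⟩) = ((s.eraseIdx p : List ℤ) : Multiset ℤ) := by
        rw [Multiset.coe_erase, hsnd.erase_get ⟨p, hp'⟩]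
      rw [herase]
      have hiff : aAlt true ((s.eraseIdx p : List ℤ) : Multiset ℤ) ↔ AltA true (s.eraseIdx p) := by
        constructor
        · intro h
          exact aAlt_canon h rfl (hsort.sublist (List.eraseIdx_sublist s p))
        · intro h
          exact ⟨_, h, rfl⟩
      simp [hiff]
    have hP : aAlt true M ↔ AltA true s :=
      ⟨fun h => aAlt_canon h hsM hsort, fun h => ⟨s, h, hsM⟩⟩
    have hN : aAlt false M ↔ AltA false s :=
      ⟨fun h => aAlt_canon h hsM hsort, fun h => ⟨s, h, hsM⟩⟩
    rw [hdc, hP, hN]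
    simpa using dcount_parity s hsne hsort h0s true
  · -- duplicate case: both sides false
    have hnot : ∀ b, ¬ aAlt b M := fun b h => hnd (aAlt_nodup h)
    simp only [hnot, or_self, iff_false]
    -- find duplicated element
    obtain ⟨v, hv⟩ : ∃ v, 2 ≤ M.count v := by
      by_contra h
      push_neg at h
      exact hnd (Multiset.nodup_iff_count_le_one.2 (fun a => by have := h a; omega))
    have hz : ∀ w ∈ M, (if aAlt true (M.erase w) then (1:ℕ) else 0)
        = (if w = v then (if aAlt true (M.erase v) then (1:ℕ) else 0) else 0) := by
      intro w hw
      by_cases hwv : w = v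
      · rw [hwv]; simp
      · rw [if_neg hwv]
        by_cases h : aAlt true (M.erase w)
        · exfalso
          have hnd' := aAlt_nodup h
          have : 2 ≤ (M.erase w).count v := by
            rw [Multiset.count_erase_of_ne (Ne.symm hwv)]
            exact hv
          have := Multiset.nodup_iff_count_le_one.1 hnd' v
          omega
        · simp [h]
    have : delCount M = M.count v * (if aAlt true (M.erase v) then 1 else 0) := by
      unfold delCount
      rw [Multiset.map_congr rfl hz, sum_map_ite_eq]
    rw [this]
    by_cases h : aAlt true (M.erase v)
    · have hnd' := aAlt_nodup h
      have hcv : (M.erase v).count v = M.count v - 1 := by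
        rw [Multiset.count_erase_self]
      have := Multiset.nodup_iff_count_le_one.1 hnd' v
      have hc2 : M.count v = 2 := by omega
      simp [h, hc2, Nat.odd_iff]
    · simp [h]


-- ==== stage 4 ====

/-- full flags in the barycentric subdivision of the boundary of the
`n`-dimensional cross-polytope: a sign pattern together with an ordering. -/
abbrev Facet (n : ℕ) := (Fin n → Bool) × Equiv.Perm (Fin n)

variable {n : ℕ}

/-- positive part of the `k`-th set of the flag -/
def posS (F : Facet n) (k : Fin n) : Finset (Fin n) :=
  Finset.univ.filter (fun i => (F.2.symm i : ℕ) ≤ (k : ℕ) ∧ F.1 i = true)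

/-- negative part of the `k`-th set of the flag -/
def negS (F : Facet n) (k : Fin n) : Finset (Fin n) :=
  Finset.univ.filter (fun i => (F.2.symm i : ℕ) ≤ (k : ℕ) ∧ F.1 i = false)

def lbl (lab : Finset (Fin n) → Finset (Fin n) → ℤ) (F : Facet n) (k : Fin n) : ℤ :=
  lab (posS F k) (negS F k)

def msl (lab : Finset (Fin n) → Finset (Fin n) → ℤ) (F : Facet n) : Multiset ℤ :=
  Finset.univ.val.map (lbl lab F)

def msd (lab : Finset (Fin n) → Finset (Fin n) → ℤ) (F : Facet n) (k : Fin n) : Multiset ℤ :=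
  (Finset.univ.val.erase k).map (lbl lab F)

lemma posS_disj (F : Facet n) (k : Fin n) : Disjoint (posS F k) (negS F k) := by
  rw [Finset.disjoint_left]
  intro i hi hi'
  rw [posS, Finset.mem_filter] at hi
  rw [negS, Finset.mem_filter] at hi'
  rw [hi.2.2] at hi'
  exact absurd hi'.2.2 (by simp)

lemma posS_union_nonempty (F : Facet n) (k : Fin n) :
    (posS F k ∪ negS F k).Nonempty := by
  refine ⟨F.2 k, ?_⟩
  rw [Finset.mem_union, posS, negS, Finset.mem_filter, Finset.mem_filter]
  have h : (F.2.symm (F.2 k) : ℕ) ≤ (k : ℕ) := by rw [Equiv.symm_apply_apply]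
  cases hb : F.1 (F.2 k)
  · exact Or.inr (by simp [h, hb])
  · exact Or.inl (by simp [h, hb])

lemma posS_mono (F : Facet n) {k k' : Fin n} (h : (k : ℕ) ≤ (k' : ℕ)) :
    posS F k ⊆ posS F k' := by
  intro i hi
  rw [posS, Finset.mem_filter] at hi ⊢
  exact ⟨hi.1, le_trans hi.2.1 h, hi.2.2⟩

lemma negS_mono (F : Facet n) {k k' : Fin n} (h : (k : ℕ) ≤ (k' : ℕ)) :
    negS F k ⊆ negS F k' := by
  intro i hi
  rw [negS, Finset.mem_filter] at hi ⊢
  exact ⟨hi.1, le_trans hi.2.1 h, hi.2.2⟩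

section FanHyp

variable (lab : Finset (Fin n) → Finset (Fin n) → ℤ)

/-- the no-complementary-edge condition plus the chain structure forbids `x, -x`
pairs among the labels of a flag -/
lemma msl_nonegpair
    (hnc : ∀ P N P' N', Disjoint P' N' → (P ∪ N).Nonempty → P ⊆ P' → N ⊆ N' →
      lab P N ≠ - lab P' N')
    (F : Facet n) : ∀ x ∈ msl lab F, -x ∉ msl lab F := by
  intro x hx hnx
  rw [msl, Multiset.mem_map] at hx hnx
  obtain ⟨j, -, hj⟩ := hx
  obtain ⟨k, -, hk⟩ := hnx
  have key : ∀ j k : Fin n, (j : ℕ) ≤ (k : ℕ) → lbl lab F j ≠ - lbl lab F k := by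
    intro j k hjk
    exact hnc (posS F j) (negS F j) (posS F k) (negS F k) (posS_disj F k)
      (posS_union_nonempty F j) (posS_mono F hjk) (negS_mono F hjk)
  rcases le_total (j : ℕ) (k : ℕ) with h | h
  · exact key j k h (by rw [hj, hk, neg_neg])
  · exact key k j h (by rw [hk, hj])

lemma msd_eq_erase (F : Facet n) (k : Fin n) :
    msd lab F k = (msl lab F).erase (lbl lab F k) := by
  rw [msd, msl]
  have : ∀ (s : Multiset (Fin n)), k ∈ s →
      (s.erase k).map (lbl lab F) = (s.map (lbl lab F)).erase (lbl lab F k) := by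
    intro s hk
    obtain ⟨t, rfl⟩ := Multiset.exists_cons_of_mem hk
    rw [Multiset.erase_cons_head, Multiset.map_cons, Multiset.erase_cons_head]
  exact this _ (Finset.mem_univ_val _)

end FanHyp

/-- parity of a finite sum equals the parity of the number of odd terms -/
lemma odd_sum_iff {β : Type*} (s : Finset β) (f : β → ℕ) :
    Odd (∑ x ∈ s, f x) ↔ Odd ((s.filter (fun x => Odd (f x))).card) := by
  classical
  induction s using Finset.cons_induction with
  | empty => simp
  | cons a s ha ih =>
    rw [Finset.sum_cons, Finset.filter_cons]
    by_cases h : Odd (f a)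
    · rw [if_pos h, Finset.card_cons]
      simp only [Nat.odd_iff] at ih h ⊢
      omega
    · rw [if_neg h]
      simp only [Nat.odd_iff] at ih ⊢
      simp only [Nat.odd_iff, Nat.not_odd_iff] at h
      omega

/-- a finset admitting a fixed-point-free involution has even cardinality -/
lemma even_card_invol {β : Type*} (f : β → β) (s : Finset β) :
    (∀ x ∈ s, f x ∈ s) → (∀ x ∈ s, f (f x) = x) → (∀ x ∈ s, f x ≠ x) →
      Even s.card := by
  classical
  induction s using Finset.strongInduction with
  | _ s ih =>
    intro hmem hinv hne
    rcases s.eq_empty_or_nonempty with rfl | ⟨x, hx⟩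
    · simp
    · have hfx : f x ∈ s := hmem x hx
      have hfxx : f x ≠ x := hne x hx
      set t := (s.erase x).erase (f x) with ht
      have htmem : ∀ y, y ∈ t ↔ y ∈ s ∧ y ≠ x ∧ y ≠ f x := by
        intro y
        simp only [ht, Finset.mem_erase]
        tauto
      have hts : t ⊂ s := by
        refine ⟨(Finset.erase_subset _ _).trans (Finset.erase_subset _ _), ?_⟩
        intro hsub
        have := (htmem x).1 (hsub hx)
        exact this.2.1 rfl
      have hcard : t.card + 2 = s.card := by
        rw [ht, Finset.card_erase_of_mem (Finset.mem_erase.2 ⟨hfxx, hfx⟩),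
          Finset.card_erase_of_mem hx]
        have h2 : 2 ≤ s.card := Finset.one_lt_card.2 ⟨x, hx, f x, hfx, fun h => hfxx h.symm⟩
        omega
      have hteven : Even t.card := by
        refine ih t hts ?_ ?_ ?_
        · intro y hy
          obtain ⟨hys, hyx, hyfx⟩ := (htmem y).1 hy
          refine (htmem (f y)).2 ⟨hmem y hys, ?_, ?_⟩
          · intro h
            apply hyfx
            rw [← hinv y hys, h]
          · intro h
            apply hyx
            have := hinv y hys
            have h2 := hinv x hx
            rw [h] at this
            rw [h2] at this
            exact this.symm ▸ rfl
        · intro y hy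
          exact hinv y ((htmem y).1 hy).1
        · intro y hy
          exact hne y ((htmem y).1 hy).1
      obtain ⟨c, hc⟩ := hteven
      exact ⟨c + 1, by omega⟩

/-- extend a permutation of `Fin n` to `Fin (n+1)` fixing `last`. -/
def extPerm (σ₀ : Equiv.Perm (Fin n)) : Equiv.Perm (Fin (n + 1)) where
  toFun := Fin.snoc (fun j => (σ₀ j).castSucc) (Fin.last n)
  invFun := Fin.snoc (fun j => (σ₀.symm j).castSucc) (Fin.last n)
  left_inv := by
    intro i
    induction i using Fin.lastCases with
    | last => simp
    | cast j => simp
  right_inv := by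
    intro i
    induction i using Fin.lastCases with
    | last => simp
    | cast j => simp

lemma extPerm_castSucc (σ₀ : Equiv.Perm (Fin n)) (j : Fin n) :
    extPerm σ₀ j.castSucc = (σ₀ j).castSucc := by
  simp [extPerm]

lemma extPerm_last (σ₀ : Equiv.Perm (Fin n)) : extPerm σ₀ (Fin.last n) = Fin.last n := by
  simp [extPerm]

lemma extPerm_symm_castSucc (σ₀ : Equiv.Perm (Fin n)) (j : Fin n) :
    (extPerm σ₀).symm j.castSucc = (σ₀.symm j).castSucc := by
  show (Fin.snoc (fun j => (σ₀.symm j).castSucc) (Fin.last n) : Fin (n+1) → Fin (n+1)) j.castSucc = _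
  simp

lemma extPerm_symm_last (σ₀ : Equiv.Perm (Fin n)) :
    (extPerm σ₀).symm (Fin.last n) = Fin.last n := by
  show (Fin.snoc (fun j => (σ₀.symm j).castSucc) (Fin.last n) : Fin (n+1) → Fin (n+1)) (Fin.last n) = _
  simp

lemma apply_castSucc_ne_last (σ : Equiv.Perm (Fin (n + 1)))
    (h : σ (Fin.last n) = Fin.last n) (j : Fin n) : σ j.castSucc ≠ Fin.last n := by
  intro he
  exact absurd (σ.injective (he.trans h.symm)) (Fin.castSucc_lt_last j).ne

lemma symm_last_eq (σ : Equiv.Perm (Fin (n + 1))) (h : σ (Fin.last n) = Fin.last n) :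
    σ.symm (Fin.last n) = Fin.last n := by
  exact (Equiv.symm_apply_eq σ).2 h.symm

/-- restrict a permutation of `Fin (n+1)` fixing `last` to `Fin n`. -/
def restrictPerm (σ : Equiv.Perm (Fin (n + 1))) (h : σ (Fin.last n) = Fin.last n) :
    Equiv.Perm (Fin n) where
  toFun j := (σ j.castSucc).castPred (apply_castSucc_ne_last σ h j)
  invFun j := (σ.symm j.castSucc).castPred
    (apply_castSucc_ne_last σ.symm (symm_last_eq σ h) j)
  left_inv := by
    intro j
    apply Fin.castSucc_injective
    rw [Fin.castSucc_castPred, Fin.castSucc_castPred, Equiv.symm_apply_apply]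
  right_inv := by
    intro j
    apply Fin.castSucc_injective
    rw [Fin.castSucc_castPred, Fin.castSucc_castPred, Equiv.apply_symm_apply]

lemma restrictPerm_castSucc (σ : Equiv.Perm (Fin (n + 1))) (h : σ (Fin.last n) = Fin.last n)
    (j : Fin n) : ((restrictPerm σ h) j).castSucc = σ j.castSucc :=
  Fin.castSucc_castPred _ (apply_castSucc_ne_last σ h j)

lemma restrictPerm_symm_castSucc (σ : Equiv.Perm (Fin (n + 1)))
    (h : σ (Fin.last n) = Fin.last n) (j : Fin n) :
    ((restrictPerm σ h).symm j).castSucc = σ.symm j.castSucc :=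
  Fin.castSucc_castPred _ (apply_castSucc_ne_last σ.symm (symm_last_eq σ h) j)

lemma restrict_ext (σ₀ : Equiv.Perm (Fin n)) :
    restrictPerm (extPerm σ₀) (extPerm_last σ₀) = σ₀ := by
  apply Equiv.ext
  intro j
  apply Fin.castSucc_injective
  rw [restrictPerm_castSucc, extPerm_castSucc]

lemma ext_restrict (σ : Equiv.Perm (Fin (n + 1))) (h : σ (Fin.last n) = Fin.last n) :
    extPerm (restrictPerm σ h) = σ := by
  apply Equiv.ext
  intro i
  induction i using Fin.lastCases with
  | last => rw [extPerm_last, h]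
  | cast j => rw [extPerm_castSucc, restrictPerm_castSucc]


lemma lbl_swap (lab : Finset (Fin n) → Finset (Fin n) → ℤ) (F : Facet n) (k k1 : Fin n)
    (hkk : (k1 : ℕ) = (k : ℕ) + 1) (j : Fin n) (hj : j ≠ k) :
    lbl lab (F.1, F.2 * Equiv.swap k k1) j = lbl lab F j := by
  have hsymm : ∀ i : Fin n, ((F.2 * Equiv.swap k k1).symm i : Fin n)
      = Equiv.swap k k1 (F.2.symm i) := by
    intro i
    have hap : (F.2 * Equiv.swap k k1) ((Equiv.swap k k1) (F.2.symm i)) = i := by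
      rw [Equiv.Perm.mul_apply, Equiv.swap_apply_self, Equiv.apply_symm_apply]
    exact (Equiv.symm_apply_eq _).2 hap.symm
  have hcond : ∀ i : Fin n, (((F.2 * Equiv.swap k k1).symm i : Fin n) : ℕ) ≤ (j : ℕ)
      ↔ ((F.2.symm i : Fin n) : ℕ) ≤ (j : ℕ) := by
    intro i
    rw [hsymm]
    have hjk : (j : ℕ) ≠ (k : ℕ) := fun h => hj (Fin.ext h)
    set y := F.2.symm i with hy
    rcases eq_or_ne y k with rfl | h1
    · rw [Equiv.swap_apply_left]
      omega
    · rcases eq_or_ne y k1 with rfl | h2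
      · rw [Equiv.swap_apply_right]
        omega
      · rw [Equiv.swap_apply_of_ne_of_ne h1 h2]
  unfold lbl posS negS
  congr 1 <;>
  · apply Finset.filter_congr
    intro i _
    rw [hcond i]

lemma lbl_flip (lab : Finset (Fin n) → Finset (Fin n) → ℤ) (F : Facet n) (a : Fin n)
    (j : Fin n) (hj : (j : ℕ) < ((F.2.symm a : Fin n) : ℕ)) :
    lbl lab (Function.update F.1 a (!F.1 a), F.2) j = lbl lab F j := by
  unfold lbl posS negS
  congr 1 <;>
  · apply Finset.filter_congr
    intro i _
    dsimp only
    rcases eq_or_ne i a with rfl | hia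
    · constructor <;> (rintro ⟨h1, -⟩; omega)
    · rw [Function.update_of_ne hia]

lemma lbl_neg (lab : Finset (Fin n) → Finset (Fin n) → ℤ)
    (hanti : ∀ P N, Disjoint P N → (P ∪ N).Nonempty → lab N P = - lab P N)
    (F : Facet n) (k : Fin n) :
    lbl lab ((fun i => !F.1 i, F.2) : Facet n) k = - lbl lab F k := by
  have hpos : posS ((fun i => !F.1 i, F.2) : Facet n) k = negS F k := by
    unfold posS negS
    apply Finset.filter_congr
    intro i _
    simp
  have hneg : negS ((fun i => !F.1 i, F.2) : Facet n) k = posS F k := by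
    unfold posS negS
    apply Finset.filter_congr
    intro i _
    simp
  unfold lbl
  rw [hpos, hneg]
  exact hanti _ _ (posS_disj F k) (posS_union_nonempty F k)

lemma msl_neg (lab : Finset (Fin n) → Finset (Fin n) → ℤ)
    (hanti : ∀ P N, Disjoint P N → (P ∪ N).Nonempty → lab N P = - lab P N)
    (F : Facet n) :
    msl lab ((fun i => !F.1 i, F.2) : Facet n) = (msl lab F).map (fun x => -x) := by
  unfold msl
  rw [Multiset.map_map]
  apply Multiset.map_congr rfl
  intro k _
  exact lbl_neg lab hanti F k

lemma msl_card (lab : Finset (Fin n) → Finset (Fin n) → ℤ) (F : Facet n) :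
    Multiset.card (msl lab F) = n := by
  unfold msl
  rw [Multiset.card_map]
  exact Finset.card_univ.trans (Fintype.card_fin n)

/-- the key boundary identification -/
lemma msd_boundary (lab : Finset (Fin (n+1)) → Finset (Fin (n+1)) → ℤ)
    (F : Facet (n+1)) (hσ : F.2 (Fin.last n) = Fin.last n) :
    msd lab F (Fin.last n)
      = msl (fun P N => lab (P.map Fin.castSuccEmb) (N.map Fin.castSuccEmb))
          ((fun i => F.1 i.castSucc, restrictPerm F.2 hσ) : Facet n) := by
  set F₀ : Facet n := (fun i => F.1 i.castSucc, restrictPerm F.2 hσ) with hF₀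
  have huniv : (Finset.univ : Finset (Fin (n+1))).val.erase (Fin.last n)
      = (Finset.univ : Finset (Fin n)).val.map Fin.castSucc := by
    rw [← Finset.erase_val]
    have h1 : (Finset.univ : Finset (Fin (n+1))).erase (Fin.last n)
        = (Finset.univ : Finset (Fin n)).map Fin.castSuccEmb := by
      ext i
      simp only [Finset.mem_erase, Finset.mem_univ, and_true, Finset.mem_map]
      constructor
      · intro hi
        obtain ⟨j, hj⟩ := Fin.exists_castSucc_eq.2 hi
        exact ⟨j, trivial, hj⟩
      · rintro ⟨j, -, rfl⟩
        exact (Fin.castSucc_lt_last j).ne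
    rw [h1, Finset.map_val]
    rfl
  have hsets : ∀ j : Fin n,
      posS F j.castSucc = (posS F₀ j).map Fin.castSuccEmb ∧
      negS F j.castSucc = (negS F₀ j).map Fin.castSuccEmb := by
    intro j
    have hmem : ∀ (b : Bool) (i : Fin (n+1)),
        (((F.2.symm i : Fin (n+1)) : ℕ) ≤ ((j.castSucc : Fin (n+1)) : ℕ) ∧ F.1 i = b)
        ↔ ∃ i₀ : Fin n, (((F₀.2.symm i₀ : Fin n) : ℕ) ≤ (j : ℕ) ∧ F₀.1 i₀ = b)
            ∧ Fin.castSuccEmb i₀ = i := by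
      intro b i
      induction i using Fin.lastCases with
      | last =>
        have h1 : F.2.symm (Fin.last n) = Fin.last n := symm_last_eq F.2 hσ
        constructor
        · rintro ⟨h2, -⟩
          rw [h1] at h2
          simp only [Fin.val_last, Fin.coe_castSucc] at h2
          omega
        · rintro ⟨i₀, -, hi₀⟩
          exact absurd hi₀ (Fin.castSucc_lt_last i₀).ne
      | cast i₀ =>
        have h1 : F.2.symm i₀.castSucc = ((restrictPerm F.2 hσ).symm i₀).castSucc :=
          (restrictPerm_symm_castSucc F.2 hσ i₀).symm
        constructor
        · rintro ⟨h2, h3⟩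
          refine ⟨i₀, ⟨?_, h3⟩, rfl⟩
          rw [h1] at h2
          simpa using h2
        · rintro ⟨i₁, ⟨h2, h3⟩, hi₁⟩
          have : i₁ = i₀ := by
            have := congrArg Fin.val hi₁
            simp [Fin.castSuccEmb] at this
            exact Fin.ext (by simpa using this)
          subst this
          refine ⟨?_, h3⟩
          rw [h1]
          simpa using h2
    constructor <;>
    · simp only [posS, negS]
      ext i
      simp only [Finset.mem_filter, Finset.mem_univ, true_and, Finset.mem_map]
      rw [hmem]
  unfold msd msl
  rw [huniv, Multiset.map_map]
  apply Multiset.map_congr rfl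
  intro j _
  show lbl lab F j.castSucc = _
  unfold lbl
  rw [(hsets j).1, (hsets j).2]


theorem fan : ∀ (n : ℕ) (lab : Finset (Fin n) → Finset (Fin n) → ℤ),
    (∀ P N, Disjoint P N → (P ∪ N).Nonempty → lab N P = - lab P N) →
    (∀ P N P' N', Disjoint P' N' → (P ∪ N).Nonempty → P ⊆ P' → N ⊆ N' →
      lab P N ≠ - lab P' N') →
    Odd ((Finset.univ.filter (fun F : Facet n => aAlt true (msl lab F))).card) := by
  intro n
  induction n with
  | zero =>
    intro lab _ _
    have h1 : (Finset.univ.filter (fun F : Facet 0 => aAlt true (msl lab F)))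
        = Finset.univ := by
      apply Finset.filter_true_of_mem
      intro F _
      exact ⟨[], trivial, by simp [msl]⟩
    rw [h1, Finset.card_univ]
    have : Fintype.card (Facet 0) = 1 := by
      rw [Fintype.card_prod, Fintype.card_fun, Fintype.card_perm]
      simp
    rw [this]
    exact ⟨0, rfl⟩
  | succ n IH =>
    intro lab hanti hnc
    classical
    -- the induced labelling on the equator
    set lab' : Finset (Fin n) → Finset (Fin n) → ℤ :=
      fun P N => lab (P.map Fin.castSuccEmb) (N.map Fin.castSuccEmb) with hlab'
    have hanti' : ∀ P N, Disjoint P N → (P ∪ N).Nonempty → lab' N P = - lab' P N := by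
      intro P N hd hn
      refine hanti _ _ ((Finset.disjoint_map _).2 hd) ?_
      rw [← Finset.map_union]
      exact hn.map
    have hnc' : ∀ P N P' N', Disjoint P' N' → (P ∪ N).Nonempty → P ⊆ P' → N ⊆ N' →
        lab' P N ≠ - lab' P' N' := by
      intro P N P' N' hd hn hP hN
      refine hnc _ _ _ _ ((Finset.disjoint_map _).2 hd) ?_
        (Finset.map_subset_map.2 hP) (Finset.map_subset_map.2 hN)
      rw [← Finset.map_union]
      exact hn.map
    have hIH := IH lab' hanti' hnc'
    -- the objects
    set upper : Facet (n+1) → Prop := fun F => F.1 (Fin.last n) = true with hupper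
    set PP : Finset (Facet (n+1) × Fin (n+1)) :=
      Finset.univ.filter (fun x => upper x.1 ∧ aAlt true (msd lab x.1 x.2)) with hPP
    set BB : Finset (Facet (n+1) × Fin (n+1)) :=
      PP.filter (fun x => x.2 = Fin.last n ∧ x.1.2 (Fin.last n) = Fin.last n) with hBB
    -- (1) |BB| = IH count
    have hBBcard : BB.card
        = (Finset.univ.filter (fun F₀ : Facet n => aAlt true (msl lab' F₀))).card := by
      symm
      refine Finset.card_bij'
        (i := fun F₀ _ => ((Fin.snoc F₀.1 true, extPerm F₀.2), Fin.last n))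
        (j := fun x hx => (fun i => x.1.1 i.castSucc,
          restrictPerm x.1.2 (Finset.mem_filter.1 hx).2.2)) ?_ ?_ ?_ ?_
      · intro F₀ hF₀
        rw [Finset.mem_filter] at hF₀
        have hσ : (extPerm F₀.2) (Fin.last n) = Fin.last n := extPerm_last F₀.2
        have hmsd := msd_boundary lab ((Fin.snoc F₀.1 true, extPerm F₀.2) : Facet (n+1)) hσ
        have hid : ((fun i => (Fin.snoc F₀.1 true : Fin (n+1) → Bool) i.castSucc,
            restrictPerm (extPerm F₀.2) hσ) : Facet n) = F₀ := by
          refine Prod.ext ?_ ?_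
          · funext i
            exact Fin.snoc_castSucc (α := fun _ : Fin (n+1) => Bool) true F₀.1 i
          · exact restrict_ext F₀.2
        rw [hid] at hmsd
        rw [hBB, hPP, Finset.mem_filter, Finset.mem_filter]
        refine ⟨⟨Finset.mem_univ _, ?_, ?_⟩, rfl, hσ⟩
        · show (Fin.snoc F₀.1 true : Fin (n+1) → Bool) (Fin.last n) = true
          exact Fin.snoc_last _ _
        · show aAlt true (msd lab (Fin.snoc F₀.1 true, extPerm F₀.2) (Fin.last n))
          rw [hmsd]
          exact hF₀.2
      · intro x hx
        have hx' := Finset.mem_filter.1 hx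
        have hσ := hx'.2.2
        have hk := hx'.2.1
        have hxPP := Finset.mem_filter.1 hx'.1
        rw [Finset.mem_filter]
        refine ⟨Finset.mem_univ _, ?_⟩
        have hmsd := msd_boundary lab x.1 hσ
        rw [← hmsd]
        rw [← hk]
        exact hxPP.2.2
      · intro F₀ hF₀
        refine Prod.ext ?_ ?_
        · funext i
          exact Fin.snoc_castSucc (α := fun _ : Fin (n+1) => Bool) true F₀.1 i
        · exact restrict_ext F₀.2
      · intro x hx
        have hx' := Finset.mem_filter.1 hx
        have hσ := hx'.2.2
        have hk := hx'.2.1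
        have hxPP := Finset.mem_filter.1 hx'.1
        have hu : x.1.1 (Fin.last n) = true := hxPP.2.1
        refine Prod.ext (Prod.ext ?_ ?_) ?_
        · funext i
          show (Fin.snoc (fun i : Fin n => x.1.1 i.castSucc) true : Fin (n+1) → Bool) i = x.1.1 i
          induction i using Fin.lastCases with
          | last => rw [Fin.snoc_last, hu]
          | cast j => rw [Fin.snoc_castSucc]
        · exact ext_restrict x.1.2 hσ
        · exact hk.symm
    -- (2) the involution on PP \ BB
    have hTeven : Even ((PP \ BB).card) := by
      set ι : Facet (n+1) × Fin (n+1) → Facet (n+1) × Fin (n+1) := fun x =>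
        if hk : (x.2 : ℕ) < n then
          ((x.1.1, x.1.2 * Equiv.swap x.2 ⟨(x.2 : ℕ) + 1, by omega⟩), x.2)
        else ((Function.update x.1.1 (x.1.2 x.2) (!(x.1.1 (x.1.2 x.2))), x.1.2), x.2) with hι
      have hmemT : ∀ x, x ∈ PP \ BB ↔
          (upper x.1 ∧ aAlt true (msd lab x.1 x.2)) ∧
            ¬(x.2 = Fin.last n ∧ x.1.2 (Fin.last n) = Fin.last n) := by
        intro x
        rw [Finset.mem_sdiff, hPP, hBB]
        rw [Finset.mem_filter, Finset.mem_filter, Finset.mem_filter]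
        constructor
        · rintro ⟨⟨h1, h2⟩, h3⟩
          exact ⟨h2, fun hc => h3 ⟨⟨h1, h2⟩, hc⟩⟩
        · rintro ⟨h1, h2⟩
          exact ⟨⟨Finset.mem_univ _, h1⟩, fun hc => h2 hc.2⟩
      refine even_card_invol ι (PP \ BB) ?_ ?_ ?_
      · -- maps into itself
        intro x hx
        rw [hmemT] at hx ⊢
        obtain ⟨⟨hu, halt⟩, hnb⟩ := hx
        by_cases hk : (x.2 : ℕ) < n
        · rw [hι]
          simp only [dif_pos hk]
          have hlbl : ∀ j ∈ (Finset.univ : Finset (Fin (n+1))).val.erase x.2,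
              lbl lab (x.1.1, x.1.2 * Equiv.swap x.2 ⟨(x.2 : ℕ) + 1, by omega⟩) j
                = lbl lab x.1 j := by
            intro j hj
            have hjne : j ≠ x.2 :=
              ((Multiset.Nodup.mem_erase_iff (Finset.univ.nodup)).1 hj).1
            exact lbl_swap lab x.1 x.2 _ rfl j hjne
          have hmsd : msd lab ((x.1.1, x.1.2 * Equiv.swap x.2 ⟨(x.2 : ℕ) + 1, by omega⟩) : Facet (n+1)) x.2
              = msd lab x.1 x.2 := Multiset.map_congr rfl hlbl
          refine ⟨⟨hu, by rw [hmsd]; exact halt⟩, ?_⟩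
          rintro ⟨hc, -⟩
          rw [hc] at hk
          simp [Fin.last] at hk
        · have hxlast : x.2 = Fin.last n := by
            apply Fin.ext
            have := x.2.isLt
            simp only [Fin.val_last]
            omega
          have ha : x.1.2 (Fin.last n) ≠ Fin.last n := by
            intro hc
            exact hnb ⟨hxlast, hc⟩
          rw [hι]
          simp only [dif_neg hk]
          set a := x.1.2 x.2 with hadef
          have hsymm_a : x.1.2.symm a = x.2 := Equiv.symm_apply_apply _ _
          have hlbl : ∀ j ∈ (Finset.univ : Finset (Fin (n+1))).val.erase x.2,
              lbl lab ((Function.update x.1.1 a (!(x.1.1 a)), x.1.2) : Facet (n+1)) j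
                = lbl lab x.1 j := by
            intro j hj
            have hjne : j ≠ x.2 :=
              ((Multiset.Nodup.mem_erase_iff (Finset.univ.nodup)).1 hj).1
            refine lbl_flip lab x.1 a j ?_
            rw [hsymm_a]
            have h1 : (j : ℕ) ≤ n := Nat.lt_succ_iff.1 j.isLt
            have h2 : (x.2 : ℕ) = n := by rw [hxlast]; rfl
            have h3 : (j : ℕ) ≠ (x.2 : ℕ) := fun hc => hjne (Fin.ext hc)
            omega
          have hmsd : msd lab ((Function.update x.1.1 a (!(x.1.1 a)), x.1.2) : Facet (n+1)) x.2
              = msd lab x.1 x.2 := Multiset.map_congr rfl hlbl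
          have ha' : a ≠ Fin.last n := by rw [hadef, hxlast]; exact ha
          refine ⟨⟨?_, by rw [hmsd]; exact halt⟩, ?_⟩
          · show Function.update x.1.1 a (!(x.1.1 a)) (Fin.last n) = true
            rw [Function.update_of_ne (Ne.symm ha')]
            exact hu
          · rintro ⟨-, hc⟩
            exact ha hc
      · -- involution
        intro x hx
        rw [hι]
        by_cases hk : (x.2 : ℕ) < n
        · simp only [dif_pos hk]
          refine Prod.ext (Prod.ext rfl ?_) rfl
          show x.1.2 * Equiv.swap x.2 _ * Equiv.swap x.2 _ = x.1.2
          rw [mul_assoc, Equiv.swap_mul_self, mul_one]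
        · simp only [dif_neg hk]
          refine Prod.ext (Prod.ext ?_ rfl) rfl
          show Function.update (Function.update x.1.1 (x.1.2 x.2) _) (x.1.2 x.2) _ = x.1.1
          rw [Function.update_self, Bool.not_not, Function.update_idem, Function.update_eq_self]
      · -- no fixed points
        intro x hx
        rw [hι]
        by_cases hk : (x.2 : ℕ) < n
        · simp only [dif_pos hk]
          intro hc
          have hσ : x.1.2 * Equiv.swap x.2 ⟨(x.2 : ℕ) + 1, by omega⟩ = x.1.2 := by
            have := congrArg (fun y => y.1.2) hc
            exact this
          have := congrArg (fun σ : Equiv.Perm (Fin (n+1)) => σ x.2) hσ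
          simp only [Equiv.Perm.mul_apply, Equiv.swap_apply_left] at this
          have h2 := x.1.2.injective this
          have := congrArg Fin.val h2
          simp at this
        · simp only [dif_neg hk]
          intro hc
          have hε := congrArg (fun y => y.1.1 (x.1.2 x.2)) hc
          simp only [Function.update_self] at hε
          exact (Bool.not_ne_self _) hε
    -- (3) fiberwise count and degree lemma
    set dF : Facet (n+1) → ℕ :=
      fun F => (Finset.univ.filter (fun k : Fin (n+1) => aAlt true (msd lab F k))).card with hdF
    have hfiber : ∀ F : Facet (n+1),
        (PP.filter (fun x => x.1 = F)).card = if upper F then dF F else 0 := by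
      intro F
      by_cases hu : upper F
      · rw [if_pos hu, hdF]
        refine Finset.card_bij' (i := fun x _ => x.2) (j := fun k _ => (F, k)) ?_ ?_ ?_ ?_
        · intro x hx
          rw [Finset.mem_filter] at hx
          obtain ⟨hxPP, hx1⟩ := hx
          rw [hPP, Finset.mem_filter] at hxPP
          rw [Finset.mem_filter]
          refine ⟨Finset.mem_univ _, ?_⟩
          have h2 := hxPP.2.2
          rw [hx1] at h2
          exact h2
        · intro k hk
          rw [Finset.mem_filter] at hk
          rw [Finset.mem_filter, hPP, Finset.mem_filter]
          exact ⟨⟨Finset.mem_univ _, hu, hk.2⟩, rfl⟩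
        · intro x hx
          rw [Finset.mem_filter] at hx
          exact Prod.ext hx.2.symm rfl
        · intro k hk
          rfl
      · rw [if_neg hu, Finset.card_eq_zero, Finset.filter_eq_empty_iff]
        intro x hx
        rw [hPP, Finset.mem_filter] at hx
        intro hx1
        exact hu (hx1 ▸ hx.2.1)
    have hPPcard : PP.card = ∑ F ∈ (Finset.univ : Finset (Facet (n+1))),
        if upper F then dF F else 0 := by
      rw [Finset.card_eq_sum_card_fiberwise
        (f := fun x : Facet (n+1) × Fin (n+1) => x.1) (t := Finset.univ)
        (fun x _ => Finset.mem_univ _)]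
      exact Finset.sum_congr rfl (fun F _ => hfiber F)
    have hmsl0 : ∀ F : Facet (n+1), msl lab F ≠ 0 := by
      intro F h
      have := msl_card lab F
      rw [h] at this
      simp at this
    have hdeg : ∀ F : Facet (n+1),
        (Odd (dF F) ↔ (aAlt true (msl lab F) ∨ aAlt false (msl lab F))) := by
      intro F
      have h1 : dF F = delCount (msl lab F) := by
        show (Finset.univ.filter (fun k : Fin (n+1) => aAlt true (msd lab F k))).card
          = delCount (msl lab F)
        rw [Finset.card_filter, Finset.sum_eq_multiset_sum]
        unfold delCount msl
        rw [Multiset.map_map]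
        apply congrArg
        apply Multiset.map_congr rfl
        intro k _
        simp only [Function.comp_apply]
        rw [msd_eq_erase lab F k]
        rfl
      rw [h1]
      exact degree_lemma (hmsl0 F) (msl_nonegpair lab hnc F)
    -- names for the five counting sets
    set S0 := Finset.univ.filter (fun F : Facet (n+1) => aAlt true (msl lab F)) with hS0
    set S1 := Finset.univ.filter
      (fun F : Facet (n+1) => upper F ∧ aAlt true (msl lab F)) with hS1
    set S2 := Finset.univ.filter
      (fun F : Facet (n+1) => ¬ upper F ∧ aAlt true (msl lab F)) with hS2
    set S3 := Finset.univ.filter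
      (fun F : Facet (n+1) => upper F ∧ aAlt false (msl lab F)) with hS3
    set S4 := Finset.univ.filter
      (fun F : Facet (n+1) => upper F ∧ (aAlt true (msl lab F) ∨ aAlt false (msl lab F))) with hS4
    -- parity of PP equals parity of S4
    have heq : Finset.univ.filter
        (fun F : Facet (n+1) => Odd (if upper F then dF F else 0)) = S4 := by
      rw [hS4]
      apply Finset.filter_congr
      intro F _
      by_cases hu : upper F
      · rw [if_pos hu]
        rw [hdeg F]
        constructor
        · intro h
          exact ⟨hu, h⟩
        · rintro ⟨-, h⟩
          exact h
      · rw [if_neg hu]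
        constructor
        · intro h
          exact absurd h (by simp)
        · rintro ⟨h1, -⟩
          exact absurd h1 hu
    have hodd1 : Odd PP.card ↔ Odd S4.card := by
      rw [hPPcard, ← heq]
      exact odd_sum_iff _ _
    -- S0 splits into S1 and S2
    have he1 : S0.card = S1.card + S2.card := by
      have h1 : S0.filter (fun F => upper F) = S1 := by
        rw [hS0, hS1, Finset.filter_filter]
        apply Finset.filter_congr
        intro F _
        exact and_comm
      have h2 : S0.filter (fun F => ¬ upper F) = S2 := by
        rw [hS0, hS2, Finset.filter_filter]
        apply Finset.filter_congr
        intro F _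
        exact and_comm
      rw [← h1, ← h2]
      exact (Finset.card_filter_add_card_filter_not (p := fun F => upper F)).symm
    -- S2 and S3 are in bijection via global sign change
    have he2 : S2.card = S3.card := by
      have hν : ∀ F : Facet (n+1),
          msl lab ((fun i => !F.1 i, F.2) : Facet (n+1))
            = (msl lab F).map (fun x => -x) := fun F => msl_neg lab hanti F
      refine Finset.card_bij'
        (i := fun F _ => ((fun i => !F.1 i, F.2) : Facet (n+1)))
        (j := fun F _ => ((fun i => !F.1 i, F.2) : Facet (n+1))) ?_ ?_ ?_ ?_
      · intro F hF
        rw [hS2, Finset.mem_filter] at hF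
        rw [hS3, Finset.mem_filter]
        have h1 : ¬ upper F := hF.2.1
        simp only [hupper] at h1
        refine ⟨Finset.mem_univ _, ?_, ?_⟩
        · show (!F.1 (Fin.last n)) = true
          cases h : F.1 (Fin.last n)
          · rfl
          · exact absurd h h1
        · have h2 := hF.2.2
          rw [hν F]
          have h3 : aAlt false ((msl lab F).map (fun x => -x)) ↔ aAlt true (msl lab F) := by
            have h4 := aAlt_map_neg (b := false) (M := msl lab F)
            simpa using h4
          exact h3.2 h2
      · intro F hF
        rw [hS3, Finset.mem_filter] at hF
        rw [hS2, Finset.mem_filter]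
        have h1 : upper F := hF.2.1
        simp only [hupper] at h1
        refine ⟨Finset.mem_univ _, ?_, ?_⟩
        · show ¬ ((!F.1 (Fin.last n)) = true)
          rw [h1]
          simp
        · have h2 := hF.2.2
          rw [hν F]
          have h3 : aAlt true ((msl lab F).map (fun x => -x)) ↔ aAlt false (msl lab F) := by
            have h4 := aAlt_map_neg (b := true) (M := msl lab F)
            simpa using h4
          exact h3.2 h2
      · intro F hF
        refine Prod.ext ?_ rfl
        funext i
        simp
      · intro F hF
        refine Prod.ext ?_ rfl
        funext i
        simp
    -- S4 splits into S1 and S3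
    have he3 : S4.card = S1.card + S3.card := by
      have h1 : S4.filter (fun F => aAlt true (msl lab F)) = S1 := by
        rw [hS4, hS1, Finset.filter_filter]
        apply Finset.filter_congr
        intro F _
        constructor
        · rintro ⟨⟨hu, -⟩, hP⟩
          exact ⟨hu, hP⟩
        · rintro ⟨hu, hP⟩
          exact ⟨⟨hu, Or.inl hP⟩, hP⟩
      have h2 : S4.filter (fun F => ¬ aAlt true (msl lab F)) = S3 := by
        rw [hS4, hS3, Finset.filter_filter]
        apply Finset.filter_congr
        intro F _
        constructor
        · rintro ⟨⟨hu, hPN⟩, hnP⟩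
          rcases hPN with hP | hN
          · exact absurd hP hnP
          · exact ⟨hu, hN⟩
        · rintro ⟨hu, hN⟩
          refine ⟨⟨hu, Or.inr hN⟩, ?_⟩
          intro hP
          have h0 := aAlt_excl (b := true) hP (by simpa using hN)
          exact hmsl0 F h0
      rw [← h1, ← h2]
      exact (Finset.card_filter_add_card_filter_not
        (p := fun F => aAlt true (msl lab F))).symm
    -- final parity bookkeeping
    have hBBsub : BB ⊆ PP := Finset.filter_subset _ _
    have hsplit : (PP \ BB).card + BB.card = PP.card :=
      Finset.card_sdiff_add_card_eq_card hBBsub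
    rw [Nat.odd_iff] at hIH ⊢
    obtain ⟨t, ht⟩ := hTeven
    have hPPodd : PP.card % 2 = 1 := by omega
    have hS4odd : S4.card % 2 = 1 := by
      have := hodd1
      rw [Nat.odd_iff, Nat.odd_iff] at this
      exact this.1 hPPodd
    omega
end

section Application

attribute [local instance] Classical.propDecidable

variable {α : Type*} [DecidableEq α]

theorem main (𝓕 : Finset (Finset α))
    (hne : ∀ F ∈ 𝓕, F.Nonempty) (r m : ℕ) (hr : cdTwo 𝓕 = r)
    (col : {F // F ∈ 𝓕} → Fin m)
    (hc : ∀ A B, (kneserGraph 𝓕).Adj A B → col A ≠ col B) :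
    ∃ i : Fin r → Fin m, StrictMono i ∧
      ∃ v : Fin r → {F // F ∈ 𝓕},
        (∀ j, col (v j) = i j) ∧
        ∀ j k : Fin r, (j : ℕ) % 2 ≠ (k : ℕ) % 2 →
          (kneserGraph 𝓕).Adj (v j) (v k) := by
  classical
  rcases Nat.eq_zero_or_pos r with rfl | hrpos
  · exact ⟨Fin.elim0, fun a => a.elim0, Fin.elim0, fun a => a.elim0, fun a => a.elim0⟩
  -- set up the ground set and its identification with `Fin n`
  set X : Finset α := 𝓕.sup id with hX
  set n : ℕ := X.card with hn
  have hFX : ∀ F ∈ 𝓕, F ⊆ X := by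
    intro F hF
    exact Finset.le_sup (f := id) hF
  -- facts about the colourability defect
  set cdset : Set ℕ := {k | ∃ Y : Finset α, Y.card = k ∧ ∃ c₂ : α → Fin 2,
    ∀ F ∈ 𝓕, Disjoint F Y → (∃ a ∈ F, c₂ a = 0) ∧ (∃ b ∈ F, c₂ b = 1)} with hcdset
  have hrle : ∀ k ∈ cdset, r ≤ k := by
    intro k hk
    rw [← hr]
    exact Nat.sInf_le hk

  have hnmem : n ∈ cdset := by
    refine ⟨X, rfl, fun _ => 0, ?_⟩
    intro F hF hdisj
    exfalso
    obtain ⟨a, ha⟩ := hne F hF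
    exact (Finset.disjoint_left.1 hdisj) ha (hFX F hF ha)
  have hrn : r ≤ n := hrle n hnmem
  have hXne : X.Nonempty := by
    rw [← Finset.card_pos]
    omega
  obtain ⟨a₀, ha₀⟩ := hXne
  -- the identification
  set q : {x // x ∈ X} ≃ Fin n := X.equivFin with hq
  set g : α → Fin n := fun a => if h : a ∈ X then q ⟨a, h⟩ else q ⟨a₀, ha₀⟩ with hg
  have hginj : ∀ a ∈ X, ∀ b ∈ X, g a = g b → a = b := by
    intro a ha b hb hab
    rw [hg] at hab
    simp only [dif_pos ha, dif_pos hb] at hab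
    have := q.injective hab
    exact congrArg Subtype.val this
  have hgsurj : ∀ i : Fin n, ∃ a ∈ X, g a = i := by
    intro i
    refine ⟨(q.symm i).1, (q.symm i).2, ?_⟩
    rw [hg]
    simp only [dif_pos (q.symm i).2]
    exact q.apply_symm_apply i
  -- images of the sets
  set fimg : Finset α → Finset (Fin n) := fun A => A.image g with hfimg
  have hdisjvert : ∀ (A B : {F // F ∈ 𝓕}) (P N : Finset (Fin n)), Disjoint P N →
      fimg (A : Finset α) ⊆ P → fimg (B : Finset α) ⊆ N → col A ≠ col B := by
    intro A B P N hPN hA hB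
    have hAB : Disjoint (A : Finset α) (B : Finset α) := by
      rw [Finset.disjoint_left]
      intro a haA haB
      have h1 : g a ∈ P := hA (Finset.mem_image_of_mem g haA)
      have h2 : g a ∈ N := hB (Finset.mem_image_of_mem g haB)
      exact (Finset.disjoint_left.1 hPN) h1 h2
    have hne' : A ≠ B := by
      intro h
      subst h
      obtain ⟨a, ha⟩ := hne (A : Finset α) A.2
      exact (Finset.disjoint_left.1 hAB) ha ha
    exact hc A B (show A ≠ B ∧ Disjoint (A : Finset α) (B : Finset α) from ⟨hne', hAB⟩)
  -- colour sets
  set CC : Finset (Fin n) → Finset (Fin m) :=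
    fun P => (Finset.univ.filter (fun A : {F // F ∈ 𝓕} => fimg (A : Finset α) ⊆ P)).image col with hCC
  have hCCmono : ∀ {P P' : Finset (Fin n)}, P ⊆ P' → CC P ⊆ CC P' := by
    intro P P' hPP'
    rw [hCC]
    apply Finset.image_subset_image
    intro A hA
    rw [Finset.mem_filter] at hA ⊢
    exact ⟨hA.1, hA.2.trans hPP'⟩
  have hCCexcl : ∀ (P N : Finset (Fin n)), Disjoint P N →
      ∀ j, j ∈ CC P → j ∈ CC N → False := by
    intro P N hPN j hjP hjN
    rw [hCC, Finset.mem_image] at hjP hjN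
    obtain ⟨A, hA, hcA⟩ := hjP
    obtain ⟨B, hB, hcB⟩ := hjN
    rw [Finset.mem_filter] at hA hB
    exact hdisjvert A B P N hPN hA.2 hB.2 (hcA.trans hcB.symm)
  have hCCmem : ∀ (P : Finset (Fin n)) (j : Fin m), j ∈ CC P →
      ∃ A : {F // F ∈ 𝓕}, col A = j ∧ fimg (A : Finset α) ⊆ P := by
    intro P j hj
    rw [hCC, Finset.mem_image] at hj
    obtain ⟨A, hA, hcA⟩ := hj
    rw [Finset.mem_filter] at hA
    exact ⟨A, hcA, hA.2⟩
  -- deletion bound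
  have hcd : ∀ P N : Finset (Fin n), Disjoint P N → CC P = ∅ → CC N = ∅ →
      (P ∪ N).card ≤ n - r := by
    intro P N hPN hCP hCN
    set Y : Finset α := X.filter (fun a => g a ∉ P ∪ N) with hY
    have hYmem : Y.card ∈ cdset := by
      refine ⟨Y, rfl, fun a => if a ∈ X ∧ g a ∈ P then 0 else 1, ?_⟩
      intro F hF hdisj
      have hgPN : ∀ a ∈ F, g a ∈ P ∪ N := by
        intro a haF
        by_contra hcon
        exact (Finset.disjoint_left.1 hdisj) haF
          (Finset.mem_filter.2 ⟨hFX F hF haF, hcon⟩)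
      have hCP' : ¬ fimg (F : Finset α) ⊆ P := by
        intro hsub
        have : col ⟨F, hF⟩ ∈ CC P := by
          rw [hCC, Finset.mem_image]
          exact ⟨⟨F, hF⟩, Finset.mem_filter.2 ⟨Finset.mem_univ _, hsub⟩, rfl⟩
        rw [hCP] at this
        exact absurd this (Finset.notMem_empty _)
      have hCN' : ¬ fimg (F : Finset α) ⊆ N := by
        intro hsub
        have : col ⟨F, hF⟩ ∈ CC N := by
          rw [hCC, Finset.mem_image]
          exact ⟨⟨F, hF⟩, Finset.mem_filter.2 ⟨Finset.mem_univ _, hsub⟩, rfl⟩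
        rw [hCN] at this
        exact absurd this (Finset.notMem_empty _)
      constructor
      · -- an element with colour 0 : one mapping into P
        rw [hfimg] at hCN'
        rw [Finset.not_subset] at hCN'
        obtain ⟨i, hi, hiN⟩ := hCN'
        rw [Finset.mem_image] at hi
        obtain ⟨a, haF, rfl⟩ := hi
        refine ⟨a, haF, ?_⟩
        have haP : g a ∈ P := by
          have := hgPN a haF
          rw [Finset.mem_union] at this
          tauto
        show (if a ∈ X ∧ g a ∈ P then (0 : Fin 2) else 1) = 0
        rw [if_pos ⟨hFX F hF haF, haP⟩]
      · rw [hfimg] at hCP'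
        rw [Finset.not_subset] at hCP'
        obtain ⟨i, hi, hiP⟩ := hCP'
        rw [Finset.mem_image] at hi
        obtain ⟨a, haF, rfl⟩ := hi
        refine ⟨a, haF, ?_⟩
        show (if a ∈ X ∧ g a ∈ P then (0 : Fin 2) else 1) = 1
        rw [if_neg (fun hcon => hiP hcon.2)]
    have hrY : r ≤ Y.card := hrle _ hYmem
    have hcount : (X.filter (fun a => g a ∈ P ∪ N)).card = (P ∪ N).card := by
      refine Finset.card_bij (i := fun a _ => g a) ?_ ?_ ?_
      · intro a ha
        exact (Finset.mem_filter.1 ha).2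
      · intro a ha b hb hab
        exact hginj a (Finset.mem_filter.1 ha).1 b (Finset.mem_filter.1 hb).1 hab
      · intro i hi
        obtain ⟨a, haX, hai⟩ := hgsurj i
        refine ⟨a, Finset.mem_filter.2 ⟨haX, ?_⟩, hai⟩
        rw [hai]
        exact hi
    have hsplitY : (X.filter (fun a => g a ∈ P ∪ N)).card + Y.card = n :=
      Finset.card_filter_add_card_filter_not (fun a => g a ∈ P ∪ N)
    omega
  -- the labelling
  set na : ℤ := ((n - r : ℕ) : ℤ) with hna
  set lab : Finset (Fin n) → Finset (Fin n) → ℤ := fun P N =>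
    if hU : (CC P ∪ CC N).Nonempty then
      (if (CC P ∪ CC N).max' hU ∈ CC P
        then na + (((CC P ∪ CC N).max' hU : Fin m) : ℕ) + 1
        else -(na + (((CC P ∪ CC N).max' hU : Fin m) : ℕ) + 1))
    else
      (if hPN : (P ∪ N).Nonempty then
        (if (P ∪ N).min' hPN ∈ P then ((P ∪ N).card : ℤ) else -((P ∪ N).card : ℤ))
      else 0) with hlab
  have h0na : (0:ℤ) ≤ na := by rw [hna]; exact Int.natCast_nonneg _
  -- antipodality
  have hanti : ∀ P N, Disjoint P N → (P ∪ N).Nonempty → lab N P = - lab P N := by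
    intro P N hd hnon
    have hUU : CC N ∪ CC P = CC P ∪ CC N := Finset.union_comm _ _
    have hPN : N ∪ P = P ∪ N := Finset.union_comm _ _
    simp only [hlab]
    by_cases hU : (CC P ∪ CC N).Nonempty
    · have hU' : (CC N ∪ CC P).Nonempty := by rw [hUU]; exact hU
      rw [dif_pos hU', dif_pos hU]
      have hmax : (CC N ∪ CC P).max' hU' = (CC P ∪ CC N).max' hU := by
        simp only [hUU]
      rw [hmax]
      set j := (CC P ∪ CC N).max' hU with hj
      have hjmem : j ∈ CC P ∪ CC N := Finset.max'_mem _ _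
      by_cases hjP : j ∈ CC P
      · have hjN : j ∉ CC N := fun h => hCCexcl P N hd j hjP h
        rw [if_pos hjP, if_neg hjN]
      · have hjN : j ∈ CC N := (Finset.mem_union.1 hjmem).resolve_left hjP
        rw [if_neg hjP, if_pos hjN, neg_neg]
    · have hU' : ¬ (CC N ∪ CC P).Nonempty := by rw [hUU]; exact hU
      rw [dif_neg hU', dif_neg hU]
      have hnon' : (N ∪ P).Nonempty := by rw [hPN]; exact hnon
      rw [dif_pos hnon', dif_pos hnon]
      have hmin : (N ∪ P).min' hnon' = (P ∪ N).min' hnon := by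
        simp only [hPN]
      rw [hmin]
      set x := (P ∪ N).min' hnon with hx
      have hxmem : x ∈ P ∪ N := Finset.min'_mem _ _
      have hcards : ((N ∪ P).card : ℤ) = ((P ∪ N).card : ℤ) := by rw [hPN]
      by_cases hxP : x ∈ P
      · have hxN : x ∉ N := fun h => (Finset.disjoint_left.1 hd) hxP h
        rw [if_pos hxP, if_neg hxN, hcards]
      · have hxN : x ∈ N := (Finset.mem_union.1 hxmem).resolve_left hxP
        rw [if_neg hxP, if_pos hxN, hcards, neg_neg]
  -- no complementary edges
  have hnc : ∀ P N P' N', Disjoint P' N' → (P ∪ N).Nonempty → P ⊆ P' → N ⊆ N' →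
      lab P N ≠ - lab P' N' := by
    intro P N P' N' hd' hnon hP hN heq
    have hd : Disjoint P N := hd'.mono hP hN
    have hnon' : (P' ∪ N').Nonempty := hnon.mono (Finset.union_subset_union hP hN)
    simp only [hlab] at heq
    by_cases hU : (CC P ∪ CC N).Nonempty <;> by_cases hU' : (CC P' ∪ CC N').Nonempty
    · rw [dif_pos hU, dif_pos hU'] at heq
      set j := (CC P ∪ CC N).max' hU with hj
      set j' := (CC P' ∪ CC N').max' hU' with hj'
      have hjmem : j ∈ CC P ∪ CC N := Finset.max'_mem _ _
      have hj'mem : j' ∈ CC P' ∪ CC N' := Finset.max'_mem _ _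
      by_cases hjP : j ∈ CC P <;> by_cases hj'P : j' ∈ CC P'
      · rw [if_pos hjP, if_pos hj'P] at heq
        omega
      · rw [if_pos hjP, if_neg hj'P] at heq
        rw [neg_neg] at heq
        have hjj : (j : ℕ) = (j' : ℕ) := by omega
        have h1 : j ∈ CC P' := hCCmono hP hjP
        have hfin : j = j' := Fin.ext hjj
        exact hj'P (hfin ▸ h1)
      · rw [if_neg hjP, if_pos hj'P] at heq
        have hjj : (j : ℕ) = (j' : ℕ) := by omega
        have hjN : j ∈ CC N := (Finset.mem_union.1 hjmem).resolve_left hjP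
        have h1 : j ∈ CC N' := hCCmono hN hjN
        have hfin : j = j' := Fin.ext hjj
        exact hCCexcl P' N' hd' j' hj'P (hfin ▸ h1)
      · rw [if_neg hjP, if_neg hj'P] at heq
        omega
    · rw [dif_pos hU, dif_neg hU', dif_pos hnon'] at heq
      have hemp := Finset.not_nonempty_iff_eq_empty.1 hU'
      rw [Finset.union_eq_empty] at hemp
      have hcard : ((P' ∪ N').card : ℤ) ≤ na := by
        have h1 := hcd P' N' hd' hemp.1 hemp.2
        rw [hna]
        exact_mod_cast h1
      have hjpos : (0:ℤ) ≤ (((CC P ∪ CC N).max' hU : Fin m) : ℕ) := Int.natCast_nonneg _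
      split_ifs at heq <;> omega
    · rw [dif_neg hU, dif_pos hU', dif_pos hnon] at heq
      have hemp := Finset.not_nonempty_iff_eq_empty.1 hU
      rw [Finset.union_eq_empty] at hemp
      have hcard : ((P ∪ N).card : ℤ) ≤ na := by
        have h1 := hcd P N hd hemp.1 hemp.2
        rw [hna]
        exact_mod_cast h1
      have hjpos : (0:ℤ) ≤ (((CC P' ∪ CC N').max' hU' : Fin m) : ℕ) := Int.natCast_nonneg _
      split_ifs at heq <;> omega
    · rw [dif_neg hU, dif_neg hU', dif_pos hnon, dif_pos hnon'] at heq
      have hcps : P ∪ N ⊆ P' ∪ N' := Finset.union_subset_union hP hN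
      have hcard_le : (P ∪ N).card ≤ (P' ∪ N').card := Finset.card_le_card hcps
      have hcard0 : 0 < (P ∪ N).card := Finset.card_pos.2 hnon
      have hceq : (P ∪ N).card = (P' ∪ N').card := by
        split_ifs at heq <;> omega
      have hsets : P ∪ N = P' ∪ N' := Finset.eq_of_subset_of_card_le hcps (le_of_eq hceq.symm)
      have hmin : (P ∪ N).min' hnon = (P' ∪ N').min' hnon' := by
        simp only [hsets]
      set x := (P ∪ N).min' hnon with hx
      have hxmem : x ∈ P ∪ N := Finset.min'_mem _ _
      by_cases hxP : x ∈ P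
      · have hxP' : x ∈ P' := hP hxP
        rw [if_pos hxP, ← hmin, if_pos hxP'] at heq
        omega
      · have hxN : x ∈ N := (Finset.mem_union.1 hxmem).resolve_left hxP
        have hxN' : x ∈ N' := hN hxN
        have hxP' : x ∉ P' := fun h => (Finset.disjoint_left.1 hd') h hxN'
        rw [if_neg hxP, ← hmin, if_neg hxP'] at heq
        omega
  -- apply Fan's theorem
  have hfan := fan n lab hanti hnc
  have hfanne : (Finset.univ.filter (fun F : Facet n => aAlt true (msl lab F))).Nonempty := by
    rw [← Finset.card_pos]
    rcases hfan with ⟨t, ht⟩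
    omega
  obtain ⟨F, hF⟩ := hfanne
  rw [Finset.mem_filter] at hF
  obtain ⟨s, hAlt, hsM⟩ := hF.2
  have hslen : s.length = n := by
    have h1 := congrArg Multiset.card hsM
    rw [Multiset.coe_card, msl_card lab F] at h1
    exact h1
  have hplt : ∀ t : Fin r, n - r + (t : ℕ) < s.length := by
    intro t
    have := t.isLt
    omega
  set sval : Fin r → ℤ := fun t => s.get ⟨n - r + (t : ℕ), hplt t⟩ with hsvaldef
  have habs : ∀ t : Fin r, ((n - r + (t : ℕ) : ℕ) : ℤ) < |sval t| := by
    intro t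
    exact hAlt.abs_get_gt _ (hplt t)
  have hsign : ∀ t : Fin r, 0 < ((-1 : ℤ)) ^ (n - r + (t : ℕ)) * sval t := by
    intro t
    have h1 := hAlt.sign_get (n - r + (t : ℕ)) (hplt t)
    simpa [hsvaldef] using h1
  have hpairs : ∀ t u : Fin r, t < u → |sval t| < |sval u| := by
    intro t u htu
    have h1 := List.pairwise_iff_get.1 hAlt.pairwise
      ⟨n - r + (t : ℕ), hplt t⟩ ⟨n - r + (u : ℕ), hplt u⟩
    exact h1 (by
      simp only [Fin.mk_lt_mk]
      have : (t : ℕ) < (u : ℕ) := htu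
      omega)
  -- extraction of a coloured vertex on the correct side at each position
  have hEX : ∀ t : Fin r, ∃ (A : {F' // F' ∈ 𝓕}) (jj : Fin m) (k : Fin n),
      col A = jj ∧
      ((sval t = na + ((jj : ℕ) : ℤ) + 1 ∧ fimg (A : Finset α) ⊆ posS F k) ∨
       (sval t = -(na + ((jj : ℕ) : ℤ) + 1) ∧ fimg (A : Finset α) ⊆ negS F k)) := by
    intro t
    have hmem : sval t ∈ msl lab F := by
      rw [← hsM]
      exact Multiset.mem_coe.2 (s.get_mem _)
    rw [msl, Multiset.mem_map] at hmem
    obtain ⟨k, -, hk⟩ := hmem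
    have hval : lab (posS F k) (negS F k) = sval t := hk
    by_cases hU : (CC (posS F k) ∪ CC (negS F k)).Nonempty
    · set jj := (CC (posS F k) ∪ CC (negS F k)).max' hU with hjj
      have hjjmem : jj ∈ CC (posS F k) ∪ CC (negS F k) := Finset.max'_mem _ _
      simp only [hlab] at hval
      rw [dif_pos hU] at hval
      by_cases hjP : jj ∈ CC (posS F k)
      · rw [if_pos hjP] at hval
        obtain ⟨A, hA1, hA2⟩ := hCCmem _ jj hjP
        exact ⟨A, jj, k, hA1, Or.inl ⟨hval.symm, hA2⟩⟩
      · rw [if_neg hjP] at hval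
        have hjN : jj ∈ CC (negS F k) := (Finset.mem_union.1 hjjmem).resolve_left hjP
        obtain ⟨A, hA1, hA2⟩ := hCCmem _ jj hjN
        exact ⟨A, jj, k, hA1, Or.inr ⟨hval.symm, hA2⟩⟩
    · exfalso
      have hemp := Finset.not_nonempty_iff_eq_empty.1 hU
      rw [Finset.union_eq_empty] at hemp
      have hcard : ((posS F k ∪ negS F k).card : ℤ) ≤ na := by
        have h1 := hcd (posS F k) (negS F k) (posS_disj F k) hemp.1 hemp.2
        rw [hna]
        exact_mod_cast h1
      simp only [hlab] at hval
      rw [dif_neg hU, dif_pos (posS_union_nonempty F k)] at hval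
      have h2 := habs t
      have h3 : ((n - r : ℕ) : ℤ) ≤ ((n - r + (t : ℕ) : ℕ) : ℤ) := by
        push_cast
        omega
      rw [hna] at hcard
      split_ifs at hval <;> rw [← hval] at h2 <;>
        simp only [abs_neg, abs_of_nonneg (Int.natCast_nonneg _)] at h2 <;> omega
  choose A jj kk hcol hor using hEX
  -- absolute values of the labels
  have hVpos : ∀ t : Fin r, (0:ℤ) < na + ((jj t : ℕ) : ℤ) + 1 := by
    intro t
    have := Int.natCast_nonneg (jj t : ℕ)
    omega
  have habsval : ∀ t : Fin r, |sval t| = na + ((jj t : ℕ) : ℤ) + 1 := by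
    intro t
    rcases hor t with ⟨he, -⟩ | ⟨he, -⟩
    · rw [he]
      exact abs_of_pos (hVpos t)
    · rw [he, abs_neg]
      exact abs_of_pos (hVpos t)
  -- strict monotonicity of the colours
  have hmono : StrictMono jj := by
    intro t u htu
    have h1 := hpairs t u htu
    rw [habsval t, habsval u] at h1
    have h2 : ((jj t : ℕ) : ℤ) < ((jj u : ℕ) : ℤ) := by omega
    have h3 : (jj t : ℕ) < (jj u : ℕ) := by exact_mod_cast h2
    exact h3
  -- adjacency helper
  have hADJ : ∀ (Aa Ab : {F' // F' ∈ 𝓕}) (ka kb : Fin n),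
      fimg (Aa : Finset α) ⊆ posS F ka → fimg (Ab : Finset α) ⊆ negS F kb →
      (kneserGraph 𝓕).Adj Aa Ab := by
    intro Aa Ab ka kb hsa hsb
    have hdab : Disjoint (Aa : Finset α) (Ab : Finset α) := by
      rw [Finset.disjoint_left]
      intro a haA haB
      rcases le_total ((ka : Fin n) : ℕ) ((kb : Fin n) : ℕ) with h | h
      · have h1 : g a ∈ posS F kb := (hsa.trans (posS_mono F h)) (Finset.mem_image_of_mem g haA)
        have h2 : g a ∈ negS F kb := hsb (Finset.mem_image_of_mem g haB)
        exact (Finset.disjoint_left.1 (posS_disj F kb)) h1 h2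
      · have h1 : g a ∈ posS F ka := hsa (Finset.mem_image_of_mem g haA)
        have h2 : g a ∈ negS F ka := (hsb.trans (negS_mono F h)) (Finset.mem_image_of_mem g haB)
        exact (Finset.disjoint_left.1 (posS_disj F ka)) h1 h2
    have hne' : Aa ≠ Ab := by
      intro h
      subst h
      obtain ⟨a, ha⟩ := hne (Aa : Finset α) Aa.2
      exact (Finset.disjoint_left.1 hdab) ha ha
    exact (show Aa ≠ Ab ∧ Disjoint (Aa : Finset α) (Ab : Finset α) from ⟨hne', hdab⟩)
  -- sign determination
  have hsgn : ∀ t : Fin r, ((n - r + (t : ℕ)) % 2 = 0 → 0 < sval t) ∧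
      ((n - r + (t : ℕ)) % 2 = 1 → sval t < 0) := by
    intro t
    have h1 := hsign t
    constructor
    · intro hev
      have h2 : ((-1 : ℤ)) ^ (n - r + (t : ℕ)) = 1 :=
        Even.neg_one_pow (Nat.even_iff.2 hev)
      rw [h2, one_mul] at h1
      exact h1
    · intro hod
      have h2 : ((-1 : ℤ)) ^ (n - r + (t : ℕ)) = -1 :=
        Odd.neg_one_pow (Nat.odd_iff.2 hod)
      rw [h2] at h1
      omega
  have hsides : ∀ t : Fin r, (0 < sval t → fimg ((A t : Finset α)) ⊆ posS F (kk t)) ∧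
      (sval t < 0 → fimg ((A t : Finset α)) ⊆ negS F (kk t)) := by
    intro t
    constructor
    · intro hpos
      rcases hor t with ⟨-, hs⟩ | ⟨he, -⟩
      · exact hs
      · exfalso
        rw [he] at hpos
        have := hVpos t
        omega
    · intro hneg
      rcases hor t with ⟨he, -⟩ | ⟨-, hs⟩
      · exfalso
        rw [he] at hneg
        have := hVpos t
        omega
      · exact hs
  refine ⟨jj, hmono, A, hcol, ?_⟩
  intro t u hpar
  have hne2 : (n - r + (t : ℕ)) % 2 ≠ (n - r + (u : ℕ)) % 2 := by omega
  rcases Nat.mod_two_eq_zero_or_one (n - r + (t : ℕ)) with h1 | h1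
  · have h2 : (n - r + (u : ℕ)) % 2 = 1 := by omega
    have hpos := (hsgn t).1 h1
    have hneg := (hsgn u).2 h2
    exact hADJ (A t) (A u) (kk t) (kk u) ((hsides t).1 hpos) ((hsides u).2 hneg)
  · have h2 : (n - r + (u : ℕ)) % 2 = 0 := by omega
    have hneg := (hsgn t).2 h1
    have hpos := (hsgn u).1 h2
    exact ((kneserGraph 𝓕).adj_symm (hADJ (A u) (A t) (kk u) (kk t)
      ((hsides u).1 hpos) ((hsides t).2 hneg)))

end Application
end KZ

theorem stmt0 {α : Type*} [DecidableEq α] (𝓕 : Finset (Finset α))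
    (hne : ∀ F ∈ 𝓕, F.Nonempty) (r m : ℕ) (hr : cdTwo 𝓕 = r)
    (c : {F // F ∈ 𝓕} → Fin m)
    (hc : ∀ A B, (kneserGraph 𝓕).Adj A B → c A ≠ c B) :
    ∃ i : Fin r → Fin m, StrictMono i ∧
      ∃ v : Fin r → {F // F ∈ 𝓕},
        (∀ j, c (v j) = i j) ∧
        ∀ j k : Fin r, (j : ℕ) % 2 ≠ (k : ℕ) % 2 →
          (kneserGraph 𝓕).Adj (v j) (v k) := by
  exact KZ.main 𝓕 hne r m hr c hc
end

section
/- Every finite graph G is isomorphic to the general Kneser graph KG(F) of some finite set system F. -/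
open Finset

section Aux

variable {V : Type*} [Fintype V] [DecidableEq V]

open scoped Classical in
noncomputable def pairCode (g : V → ℕ) (u v : V) : ℕ :=
  Nat.pair (min (g u) (g v)) (max (g u) (g v))

lemma pairCode_symm (g : V → ℕ) (u v : V) : pairCode g u v = pairCode g v u := by
  unfold pairCode
  rw [min_comm, max_comm]

lemma pairCode_eq_iff {g : V → ℕ} (hg : Function.Injective g) {a b c d : V}
    (h : pairCode g a b = pairCode g c d) : (a = c ∧ b = d) ∨ (a = d ∧ b = c) := by
  unfold pairCode at h
  have h1 := congrArg Nat.unpair h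
  simp only [Nat.unpair_pair] at h1
  have hmin : min (g a) (g b) = min (g c) (g d) := congrArg Prod.fst h1
  have hmax : max (g a) (g b) = max (g c) (g d) := congrArg Prod.snd h1
  rcases le_total (g a) (g b) with hab | hab <;>
    rcases le_total (g c) (g d) with hcd | hcd <;>
    simp [min_eq_left, min_eq_right, max_eq_left, max_eq_right, hab, hcd] at hmin hmax
  · exact Or.inl ⟨hg hmin, hg hmax⟩
  · exact Or.inr ⟨hg hmin, hg hmax⟩
  · exact Or.inr ⟨hg hmax, hg hmin⟩
  · exact Or.inl ⟨hg hmax, hg hmin⟩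

end Aux

theorem stmt9 {V : Type*} [Fintype V] [DecidableEq V] (G : SimpleGraph V) :
    ∃ 𝓕 : Finset (Finset ℕ), Nonempty (G ≃g kneserGraph 𝓕) := by
  classical
  set g : V → ℕ := fun v => (Fintype.equivFin V v : ℕ) with hgdef
  have hg : Function.Injective g := by
    intro a b h
    exact (Fintype.equivFin V).injective (Fin.ext h)
  set S : V → Finset ℕ :=
    fun v => (univ.filter (fun u => ¬ G.Adj v u)).image (pairCode g v) with hSdef
  have memS : ∀ v x, x ∈ S v ↔ ∃ u, ¬ G.Adj v u ∧ pairCode g v u = x := by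
    intro v x
    simp [hSdef]
  have hSinj : Function.Injective S := by
    intro u v h
    have : pairCode g u u ∈ S v := by
      rw [← h, memS]
      exact ⟨u, G.loopless.irrefl u, rfl⟩
    rw [memS] at this
    obtain ⟨w, hw, hww⟩ := this
    rcases pairCode_eq_iff hg hww with ⟨h1, h2⟩ | ⟨h1, h2⟩
    · exact h1.symm
    · exact h1.symm
  refine ⟨univ.image S, ⟨?_⟩⟩
  have hbij : Function.Bijective (fun v => (⟨S v, mem_image_of_mem S (mem_univ v)⟩ :
      {F // F ∈ univ.image S})) := by
    constructor
    · intro a b h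
      exact hSinj (congrArg Subtype.val h)
    · rintro ⟨F, hF⟩
      obtain ⟨v, _, hv⟩ := mem_image.mp hF
      exact ⟨v, Subtype.ext hv⟩
  refine ⟨Equiv.ofBijective _ hbij, ?_⟩
  intro u v
  simp only [Equiv.ofBijective_apply, kneserGraph]
  constructor
  · rintro ⟨hne, hdisj⟩
    have huv : u ≠ v := fun h => hne (by rw [h])
    by_contra hadj
    have h1 : pairCode g u v ∈ S u := (memS u _).mpr ⟨v, hadj, rfl⟩
    have h2 : pairCode g u v ∈ S v := by
      rw [memS]
      exact ⟨u, fun h => hadj h.symm, pairCode_symm g v u⟩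
    exact (Finset.disjoint_left.mp hdisj h1) h2
  · intro hadj
    have huv : u ≠ v := G.ne_of_adj hadj
    refine ⟨fun h => huv (hSinj (congrArg Subtype.val h)), ?_⟩
    rw [Finset.disjoint_left]
    intro x hxu hxv
    obtain ⟨w, hw, hww⟩ := (memS u x).mp hxu
    obtain ⟨w', hw', hww'⟩ := (memS v x).mp hxv
    rcases pairCode_eq_iff hg (hww.trans hww'.symm) with ⟨h1, h2⟩ | ⟨h1, h2⟩
    · exact huv h1
    · exact hw (h2 ▸ hadj)
end

section
/- The body of the box complex B_0(K_n) of the complete graph K_n is Z_2-homeomorphic to the sphere S^{n-1} with the antipodal action. -/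
open Finset

/-- The body of the box complex `B₀(G)`, realized concretely inside
`ℝ^(V × Bool)` as the set of convex-combination weight functions whose
support `S ⊎ T` is a simplex of `B₀(G)`: the supports in the two copies are
disjoint and completely joined in `G` (both encoded by the adjacency
condition, since `G` is loopless). -/
def boxBody {V : Type*} [Fintype V] (G : SimpleGraph V) : Set (V × Bool → ℝ) :=
  {w | (∀ p, 0 ≤ w p) ∧ (∑ p, w p) = 1 ∧
    ∀ u v : V, 0 < w (u, false) → 0 < w (v, true) → G.Adj u v}

namespace Stmt12Aux

noncomputable def toVec (n : ℕ) (w : Fin n × Bool → ℝ) : EuclideanSpace ℝ (Fin n) :=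
  (WithLp.equiv 2 (Fin n → ℝ)).symm (fun i => w (i, true) - w (i, false))

noncomputable def fromVec (n : ℕ) (y : EuclideanSpace ℝ (Fin n)) : Fin n × Bool → ℝ :=
  fun p => (if p.2 then max (y p.1) 0 else max (-(y p.1)) 0) / (∑ j, |y j|)






lemma toVec_apply (n : ℕ) (w : Fin n × Bool → ℝ) (i : Fin n) :
    toVec n w i = w (i, true) - w (i, false) := rfl

lemma disj {n : ℕ} {w : Fin n × Bool → ℝ} (hw : w ∈ boxBody (⊤ : SimpleGraph (Fin n)))
    (i : Fin n) : w (i, true) = 0 ∨ w (i, false) = 0 := by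
  by_contra h
  push_neg at h
  have h1 : 0 < w (i, false) := lt_of_le_of_ne (hw.1 _) (Ne.symm h.2)
  have h2 : 0 < w (i, true) := lt_of_le_of_ne (hw.1 _) (Ne.symm h.1)
  exact (hw.2.2 i i h1 h2).ne rfl

lemma abs_toVec {n : ℕ} {w : Fin n × Bool → ℝ} (hw : w ∈ boxBody (⊤ : SimpleGraph (Fin n)))
    (i : Fin n) : |toVec n w i| = w (i, true) + w (i, false) := by
  rcases disj hw i with h | h <;> rw [toVec_apply, h] <;>
    simp [abs_of_nonneg, abs_of_nonpos, hw.1 (i, true), hw.1 (i, false),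
      neg_nonpos.mpr (hw.1 (i, false))]

lemma sum_abs_toVec {n : ℕ} {w : Fin n × Bool → ℝ} (hw : w ∈ boxBody (⊤ : SimpleGraph (Fin n))) :
    ∑ i, |toVec n w i| = 1 := by
  have := hw.2.1
  rw [Fintype.sum_prod_type] at this
  calc ∑ i, |toVec n w i| = ∑ i, (w (i, true) + w (i, false)) := by
        exact Finset.sum_congr rfl fun i _ => abs_toVec hw i
    _ = 1 := by simpa [Fintype.sum_bool, add_comm] using this

lemma toVec_ne_zero {n : ℕ} {w : Fin n × Bool → ℝ}
    (hw : w ∈ boxBody (⊤ : SimpleGraph (Fin n))) : toVec n w ≠ 0 := by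
  intro h
  have := sum_abs_toVec hw
  rw [h] at this
  simp at this

lemma sum_abs_pos {n : ℕ} {y : EuclideanSpace ℝ (Fin n)} (hy : y ≠ 0) :
    0 < ∑ j, |y j| := by
  have h0 : ∃ j, y j ≠ 0 := by
    by_contra h
    push_neg at h
    exact hy (PiLp.ext fun i => by simp [h i])
  obtain ⟨j, hj⟩ := h0
  exact Finset.sum_pos' (fun i _ => abs_nonneg _) ⟨j, Finset.mem_univ j, abs_pos.mpr hj⟩

lemma fromVec_mem {n : ℕ} {y : EuclideanSpace ℝ (Fin n)} (hy : y ≠ 0) :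
    fromVec n y ∈ boxBody (⊤ : SimpleGraph (Fin n)) := by
  have hs := sum_abs_pos hy
  refine ⟨fun p => div_nonneg (by positivity) hs.le, ?_, ?_⟩
  · rw [Fintype.sum_prod_type]
    have : ∀ i : Fin n, ∑ b, fromVec n y (i, b) = |y i| / (∑ j, |y j|) := by
      intro i
      rw [Fintype.sum_bool]
      simp only [fromVec, Bool.false_eq_true, if_true, if_false]
      rw [← add_div]
      congr 1
      rcases le_or_gt 0 (y i) with h | h
      · rw [max_eq_left h, max_eq_right (by linarith), abs_of_nonneg h]; ring
      · rw [max_eq_right h.le, max_eq_left (by linarith), abs_of_neg h]; ring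
    rw [Finset.sum_congr rfl fun i _ => this i, ← Finset.sum_div, div_self hs.ne']
  · intro u v hu hv
    simp only [fromVec, Bool.false_eq_true, if_true, if_false] at hu hv
    have hu' : y u < 0 := by
      by_contra h
      push_neg at h
      rw [max_eq_right (by linarith)] at hu
      simp at hu
    have hv' : 0 < y v := by
      by_contra h
      push_neg at h
      rw [max_eq_right h] at hv
      simp at hv
    exact (SimpleGraph.top_adj _ _).mpr (fun h => by subst h; linarith)

lemma fromVec_smul {n : ℕ} (y : EuclideanSpace ℝ (Fin n)) {c : ℝ} (hc : 0 < c) :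
    fromVec n (c • y) = fromVec n y := by
  funext p
  have hsum : ∑ j, |(c • y) j| = c * ∑ j, |y j| := by
    rw [Finset.mul_sum]
    refine Finset.sum_congr rfl fun j _ => ?_
    rw [PiLp.smul_apply, smul_eq_mul, abs_mul, abs_of_pos hc]
  simp only [fromVec, hsum]
  rcases Bool.eq_false_or_eq_true p.2 with h | h <;> rw [h] <;>
    simp only [if_true, Bool.false_eq_true, if_false, PiLp.smul_apply, smul_eq_mul]
  · rw [show c * y p.1 ⊔ 0 = c * (y p.1 ⊔ 0) by rw [mul_max_of_nonneg _ _ hc.le, mul_zero],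
      mul_div_mul_left _ _ hc.ne']
  · rw [show -(c * y p.1) ⊔ 0 = c * (-y p.1 ⊔ 0) by
        rw [mul_max_of_nonneg _ _ hc.le, mul_zero, mul_neg],
      mul_div_mul_left _ _ hc.ne']

lemma fromVec_toVec {n : ℕ} {w : Fin n × Bool → ℝ}
    (hw : w ∈ boxBody (⊤ : SimpleGraph (Fin n)))
    (hsum : ∑ i, |toVec n w i| = 1) :
    fromVec n (toVec n w) = w := by
  funext p
  obtain ⟨i, b⟩ := p
  simp only [fromVec, hsum, div_one]
  rcases disj hw i with h | h <;> cases b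
  · simp only [Bool.false_eq_true, if_false, toVec_apply, h, zero_sub, neg_neg]
    exact max_eq_left (hw.1 (i, false))
  · simp only [if_true, toVec_apply, h, zero_sub]
    rw [max_eq_right (neg_nonpos.mpr (hw.1 (i, false)))]
  · simp only [Bool.false_eq_true, if_false, toVec_apply, h, sub_zero]
    rw [max_eq_right (neg_nonpos.mpr (hw.1 (i, true)))]
  · simp only [if_true, toVec_apply, h, sub_zero]
    exact max_eq_left (hw.1 (i, true))

lemma toVec_fromVec {n : ℕ} (y : EuclideanSpace ℝ (Fin n)) :
    toVec n (fromVec n y) = (∑ j, |y j|)⁻¹ • y := by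
  apply PiLp.ext
  intro i
  rw [toVec_apply, PiLp.smul_apply, smul_eq_mul]
  simp only [fromVec, if_true, Bool.false_eq_true, if_false]
  rw [div_sub_div_same]
  rcases le_or_gt 0 (y i) with h | h
  · rw [max_eq_left h, max_eq_right (by linarith)]
    ring
  · rw [max_eq_right h.le, max_eq_left (by linarith)]
    ring

lemma continuous_toVec (n : ℕ) : Continuous (toVec n) := by
  exact (PiLp.continuous_toLp 2 (fun _ : Fin n => ℝ)).comp
    (continuous_pi fun i => ((continuous_apply (i, true)).sub (continuous_apply (i, false))))

lemma continuous_fromVec (n : ℕ) :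
    ContinuousOn (fromVec n) {y : EuclideanSpace ℝ (Fin n) | y ≠ 0} := by
  have hcont : ∀ i : Fin n, Continuous fun y : EuclideanSpace ℝ (Fin n) => y i :=
    fun i => (continuous_apply i).comp (PiLp.continuous_ofLp 2 (fun _ : Fin n => ℝ))
  have hs : Continuous fun y : EuclideanSpace ℝ (Fin n) => ∑ j, |y j| :=
    continuous_finset_sum _ fun j _ => (hcont j).abs
  apply continuousOn_pi.mpr
  intro p
  apply ContinuousOn.div
  · apply Continuous.continuousOn
    cases p.2
    · simpa using ((hcont p.1).neg.max continuous_const)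
    · simpa using ((hcont p.1).max continuous_const)
  · exact hs.continuousOn
  · intro y hy
    have h0 : ∃ j, y j ≠ 0 := by
      by_contra h
      push_neg at h
      exact hy (PiLp.ext fun i => by simp [h i])
    obtain ⟨j, hj⟩ := h0
    exact (Finset.sum_pos' (fun i _ => abs_nonneg _)
      ⟨j, Finset.mem_univ j, abs_pos.mpr hj⟩).ne'
end Stmt12Aux

open Stmt12Aux in
/-- `‖B₀(Kₙ)‖` is `ℤ₂`-homeomorphic to the sphere `S^{n-1}` with the
antipodal action. -/
theorem stmt12 (n : ℕ) (hn : 1 ≤ n) :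
    ∃ φ : boxBody (⊤ : SimpleGraph (Fin n)) ≃ₜ
        Metric.sphere (0 : EuclideanSpace ℝ (Fin n)) 1,
      ∀ w w' : boxBody (⊤ : SimpleGraph (Fin n)),
        ((w' : Fin n × Bool → ℝ) = fun p => (w : Fin n × Bool → ℝ) (p.1, !p.2)) →
        (φ w' : EuclideanSpace ℝ (Fin n)) = -(φ w : EuclideanSpace ℝ (Fin n)) := by
  classical
  have hg : Continuous fun w : boxBody (⊤ : SimpleGraph (Fin n)) => toVec n w.1 :=
    (continuous_toVec n).comp continuous_subtype_val
  refine ⟨⟨⟨fun w => ⟨‖toVec n w.1‖⁻¹ • toVec n w.1, ?_⟩,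
      fun y => ⟨fromVec n y.1, ?_⟩, ?_, ?_⟩, ?_, ?_⟩, ?_⟩
  · rw [mem_sphere_zero_iff_norm]
    exact norm_smul_inv_norm (toVec_ne_zero w.2)
  · exact fromVec_mem (norm_ne_zero_iff.mp (by
      rw [mem_sphere_zero_iff_norm.mp y.2]; norm_num))
  · intro w
    apply Subtype.ext
    show fromVec n (‖toVec n w.1‖⁻¹ • toVec n w.1) = w.1
    rw [fromVec_smul _ (inv_pos.mpr (norm_pos_iff.mpr (toVec_ne_zero w.2)))]
    exact fromVec_toVec w.2 (sum_abs_toVec w.2)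
  · intro y
    apply Subtype.ext
    show ‖toVec n (fromVec n y.1)‖⁻¹ • toVec n (fromVec n y.1) = y.1
    have hy0 : (y : EuclideanSpace ℝ (Fin n)) ≠ 0 :=
      norm_ne_zero_iff.mp (by rw [mem_sphere_zero_iff_norm.mp y.2]; norm_num)
    have hs : 0 < ∑ j, |(y : EuclideanSpace ℝ (Fin n)) j| := sum_abs_pos hy0
    rw [toVec_fromVec]
    rw [norm_smul, mem_sphere_zero_iff_norm.mp y.2, mul_one, Real.norm_eq_abs,
      abs_of_pos (inv_pos.mpr hs), inv_inv, smul_smul, mul_inv_cancel₀ hs.ne', one_smul]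
  · exact (((continuous_norm.comp hg).inv₀
      fun w => norm_ne_zero_iff.mpr (toVec_ne_zero w.2)).smul hg).subtype_mk _
  · refine (Continuous.subtype_mk ?_ _)
    exact (continuous_fromVec n).comp_continuous continuous_subtype_val
      fun y => norm_ne_zero_iff.mp (by rw [mem_sphere_zero_iff_norm.mp y.2]; norm_num)
  · intro w w' h
    show ‖toVec n w'.1‖⁻¹ • toVec n w'.1 = -(‖toVec n w.1‖⁻¹ • toVec n w.1)
    have htv : toVec n (w' : Fin n × Bool → ℝ) = -toVec n (w : Fin n × Bool → ℝ) := by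
      apply PiLp.ext
      intro i
      rw [h]
      show (w : Fin n × Bool → ℝ) (i, !true) - (w : Fin n × Bool → ℝ) (i, !false) =
        -((w : Fin n × Bool → ℝ) (i, true) - (w : Fin n × Bool → ℝ) (i, false))
      simp
    rw [htv, norm_neg, smul_neg]
end

section
/- Let F be a finite family of nonempty sets with cd_2(F) = r ≥ 1. Then coind(B_0(KG(F))) ≥ r - 1, i.e., there is a Z_2-map from S^{r-1} to the body of the box complex B_0(KG(F)). -/
open Finset

open Finset

/-- There is a `ℤ₂`-map from the sphere `S^h` to `‖B₀(G)‖`, where the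
involution on the body interchanges the two copies of `V`.  Thus
`coind(B₀(G)) ≥ h`. -/
def hasZ2Map {V : Type*} [Fintype V] (h : ℕ) (G : SimpleGraph V) : Prop :=
  ∃ f : Metric.sphere (0 : EuclideanSpace ℝ (Fin (h + 1))) 1 → (V × Bool → ℝ),
    Continuous f ∧ (∀ x, f x ∈ boxBody G) ∧
    ∀ x, f (-x) = fun p => f x (p.1, !p.2)

lemma continuous_finset_inf'' {ι X : Type*} [TopologicalSpace X] (s : Finset ι)
    (hs : s.Nonempty) (f : ι → X → ℝ) (hf : ∀ i, Continuous (f i)) :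
    Continuous (fun x => s.inf' hs fun i => f i x) := by
  induction hs using Finset.Nonempty.cons_induction with
  | singleton i => simpa using hf i
  | cons i s hi hs ih =>
      have : (fun x => (Finset.cons i s hi).inf' (Finset.cons_nonempty hi) fun j => f j x)
          = fun x => min (f i x) (s.inf' hs fun j => f j x) := by
        funext x; rw [Finset.inf'_cons]
      rw [this]
      exact (hf i).min ih

/-- `coind(B₀(KG(𝓕))) ≥ cd₂(𝓕) - 1`. -/
theorem stmt14 {α : Type*} [DecidableEq α] (𝓕 : Finset (Finset α))
    (hne : ∀ F ∈ 𝓕, F.Nonempty) (r : ℕ) (hr : cdTwo 𝓕 = r) (hr1 : 1 ≤ r) :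
    hasZ2Map (r - 1) (kneserGraph 𝓕) := by
  classical
  set n := r - 1 + 1 with hn
  have hnr : n = r := by omega
  set S : Finset α := 𝓕.sup id with hS
  have hFS : ∀ F ∈ 𝓕, F ⊆ S := fun F hF => Finset.le_sup (f := id) hF
  set t : α → ℝ := fun a => (S.toList.idxOf a : ℝ) with htdef
  have ht : ∀ a ∈ S, ∀ b ∈ S, t a = t b → a = b := by
    intro a ha b hb hab
    have ha' : a ∈ S.toList := Finset.mem_toList.mpr ha
    have hb' : b ∈ S.toList := Finset.mem_toList.mpr hb
    exact (List.idxOf_inj ha').mp (Nat.cast_injective hab)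
  set g : α → EuclideanSpace ℝ (Fin n) → ℝ :=
    fun a x => ∑ j : Fin n, x j * (t a) ^ (j : ℕ) with hg
  have hgneg : ∀ a (x : EuclideanSpace ℝ (Fin n)), g a (-x) = - g a x := by
    intro a x
    simp [hg, PiLp.neg_apply, neg_mul, Finset.sum_neg_distrib]
  have hgc : ∀ a, Continuous fun x : EuclideanSpace ℝ (Fin n) => g a x := by
    intro a
    exact continuous_finset_sum _ fun j _ => ((continuous_apply j).comp (PiLp.continuous_ofLp 2 _)).mul continuous_const
  -- key combinatorial lemma
  have key : ∀ x : EuclideanSpace ℝ (Fin n), x ≠ 0 →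
      ∃ A ∈ 𝓕, (∀ a ∈ A, 0 < g a x) ∨ (∀ a ∈ A, g a x < 0) := by
    intro x hx
    set P : Polynomial ℝ := ∑ j : Fin n, Polynomial.C (x j) * Polynomial.X ^ (j : ℕ) with hP
    have hPeval : ∀ a, P.eval (t a) = g a x := by
      intro a
      simp [hP, hg, Polynomial.eval_finset_sum]
    have hPcoeff : ∀ j : Fin n, P.coeff (j : ℕ) = x j := by
      intro j
      rw [hP, Polynomial.finset_sum_coeff]
      rw [Finset.sum_eq_single j]
      · simp
      · intro i _ hij
        have : (i : ℕ) ≠ (j : ℕ) := fun h => hij (Fin.ext h)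
        rw [Polynomial.coeff_C_mul, Polynomial.coeff_X_pow, if_neg (fun h => this h.symm),
          mul_zero]
      · simp
    have hPne : P ≠ 0 := by
      have : ∃ j : Fin n, x j ≠ 0 := by
        by_contra h
        push_neg at h
        exact hx (by ext j; simpa using h j)
      obtain ⟨j, hj⟩ := this
      intro h0
      exact hj (by rw [← hPcoeff j, h0, Polynomial.coeff_zero])
    have hPdeg : P.natDegree ≤ r - 1 := by
      apply Polynomial.natDegree_sum_le_of_forall_le
      intro j _
      refine (Polynomial.natDegree_C_mul_le _ _).trans ?_
      rw [Polynomial.natDegree_X_pow]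
      omega
    set Y : Finset α := S.filter (fun a => P.eval (t a) = 0) with hY
    have hYcard : Y.card ≤ r - 1 := by
      have hinj : Set.InjOn t Y := by
        intro a ha b hb hab
        exact ht a (Finset.mem_of_mem_filter a ha) b (Finset.mem_of_mem_filter b hb) hab
      have h1 : Y.card = (Y.image t).card := (Finset.card_image_of_injOn hinj).symm
      have h2 : Y.image t ⊆ P.roots.toFinset := by
        intro y hy
        obtain ⟨a, ha, rfl⟩ := Finset.mem_image.mp hy
        rw [Multiset.mem_toFinset, Polynomial.mem_roots hPne]
        exact (Finset.mem_filter.mp ha).2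
      calc Y.card = (Y.image t).card := h1
        _ ≤ P.roots.toFinset.card := Finset.card_le_card h2
        _ ≤ Multiset.card P.roots := Multiset.toFinset_card_le _
        _ ≤ P.natDegree := Polynomial.card_roots' P
        _ ≤ r - 1 := hPdeg
    -- Y.card is smaller than the defect, so no proper coloring avoiding Y
    have hnotex : ¬ ∃ c : α → Fin 2, ∀ F ∈ 𝓕, Disjoint F Y →
        (∃ a ∈ F, c a = 0) ∧ (∃ b ∈ F, c b = 1) := by
      rintro ⟨c, hc⟩
      have hmem : Y.card ∈ {k | ∃ Y' : Finset α, Y'.card = k ∧ ∃ c : α → Fin 2,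
          ∀ F ∈ 𝓕, Disjoint F Y' → (∃ a ∈ F, c a = 0) ∧ (∃ b ∈ F, c b = 1)} :=
        ⟨Y, rfl, c, hc⟩
      have := Nat.sInf_le hmem
      rw [show sInf _ = cdTwo 𝓕 from rfl, hr] at this
      omega
    push_neg at hnotex
    obtain ⟨F, hF, hFY, hmono⟩ := hnotex (fun a => if 0 < g a x then 0 else 1)
    refine ⟨F, hF, ?_⟩
    have hFne0 : ∀ a ∈ F, g a x ≠ 0 := by
      intro a ha
      have haS : a ∈ S := hFS F hF ha
      have : a ∉ Y := Finset.disjoint_left.mp hFY ha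
      rw [hY, Finset.mem_filter] at this
      intro h0
      exact this ⟨haS, by rw [hPeval a]; exact h0⟩
    by_cases hex : ∃ a ∈ F, (if 0 < g a x then (0 : Fin 2) else 1) = 0
    · left
      intro a ha
      have := hmono hex a ha
      by_contra hpos
      simp [hpos] at this
    · right
      intro a ha
      push_neg at hex
      have := hex a ha
      have hle : ¬ 0 < g a x := by
        intro hpos
        simp [hpos] at this
      exact lt_of_le_of_ne (not_lt.mp hle) (hFne0 a ha)
  -- the weight functions
  have hVne : ∀ A : {F // F ∈ 𝓕}, (A.1 : Finset α).Nonempty := fun A => hne A.1 A.2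
  set N : {F // F ∈ 𝓕} → EuclideanSpace ℝ (Fin n) → ℝ :=
    fun A x => max ((A.1).inf' (hVne A) fun a => g a x) 0 with hNdef
  have hNnn : ∀ A x, 0 ≤ N A x := fun A x => le_max_right _ _
  have hNc : ∀ A, Continuous (N A) := fun A =>
    (continuous_finset_inf'' _ (hVne A) _ hgc).max continuous_const
  have hNpos : ∀ A x, 0 < N A x ↔ ∀ a ∈ (A.1 : Finset α), 0 < g a x := by
    intro A x
    rw [hNdef]
    simp only [lt_max_iff, lt_self_iff_false, or_false]
    exact Finset.lt_inf'_iff _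
  set w : EuclideanSpace ℝ (Fin n) → ({F // F ∈ 𝓕} × Bool → ℝ) :=
    fun x p => N p.1 (cond p.2 x (-x)) with hwdef
  have hwnn : ∀ x p, 0 ≤ w x p := fun x p => hNnn _ _
  have hwNtrue : ∀ (x : EuclideanSpace ℝ (Fin n)) u, w x (u, true) = N u x := fun _ _ => rfl
  have hwNfalse : ∀ (x : EuclideanSpace ℝ (Fin n)) u, w x (u, false) = N u (-x) := fun _ _ => rfl
  have hwswap : ∀ (x : EuclideanSpace ℝ (Fin n)) p, w (-x) p = w x (p.1, !p.2) := by
    intro x p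
    rcases p with ⟨A, b⟩
    cases b <;> simp [hwdef]
  set T : EuclideanSpace ℝ (Fin n) → ℝ := fun x => ∑ p, w x p with hTdef
  have hTc : Continuous T := by
    apply continuous_finset_sum
    intro p _
    have : Continuous fun x : EuclideanSpace ℝ (Fin n) => cond p.2 x (-x) := by
      cases p.2
      · exact continuous_neg
      · exact continuous_id
    exact (hNc p.1).comp this
  have hTpos : ∀ x : EuclideanSpace ℝ (Fin n), x ≠ 0 → 0 < T x := by
    intro x hx
    obtain ⟨A, hA, hAc⟩ := key x hx
    apply Finset.sum_pos'
    · intro p _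
      exact hwnn x p
    · rcases hAc with hpos | hneg
      · refine ⟨(⟨A, hA⟩, true), Finset.mem_univ _, ?_⟩
        rw [hwNtrue]
        exact (hNpos _ _).mpr hpos
      · refine ⟨(⟨A, hA⟩, false), Finset.mem_univ _, ?_⟩
        rw [hwNfalse]
        refine (hNpos _ _).mpr ?_
        intro a ha
        rw [hgneg]
        exact neg_pos.mpr (hneg a ha)
  have hTswap : ∀ x : EuclideanSpace ℝ (Fin n), T (-x) = T x := by
    intro x
    rw [hTdef]
    refine Fintype.sum_equiv
      ((Equiv.refl {F // F ∈ 𝓕}).prodCongr (Function.Involutive.toPerm Bool.not Bool.not_not))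
      _ _ ?_
    intro p
    exact hwswap x p
  -- the map
  refine ⟨fun x => fun p => w (x : EuclideanSpace ℝ (Fin n)) p / T (x : EuclideanSpace ℝ (Fin n)),
    ?_, ?_, ?_⟩
  · apply continuous_pi
    intro p
    have hxne : ∀ x : Metric.sphere (0 : EuclideanSpace ℝ (Fin n)) 1,
        T (x : EuclideanSpace ℝ (Fin n)) ≠ 0 := by
      intro x
      refine ne_of_gt (hTpos _ ?_)
      have := x.2
      simp only [Metric.mem_sphere, dist_zero_right] at this
      intro h0
      rw [h0] at this
      simp at this
    have hwc : Continuous fun x : EuclideanSpace ℝ (Fin n) => w x p := by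
      have : Continuous fun x : EuclideanSpace ℝ (Fin n) => cond p.2 x (-x) := by
        cases p.2
        · exact continuous_neg
        · exact continuous_id
      exact (hNc p.1).comp this
    exact (hwc.comp continuous_subtype_val).div (hTc.comp continuous_subtype_val) hxne
  · intro x
    have hxne : (x : EuclideanSpace ℝ (Fin n)) ≠ 0 := by
      have := x.2
      simp only [Metric.mem_sphere, dist_zero_right] at this
      intro h0
      rw [h0] at this
      simp at this
    have hT := hTpos _ hxne
    refine ⟨fun p => div_nonneg (hwnn _ _) hT.le, ?_, ?_⟩
    · rw [← Finset.sum_div, div_self (ne_of_gt hT)]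
    · intro u v hu hv
      have hu2 : 0 < w (x : EuclideanSpace ℝ (Fin n)) (u, false) /
          T (x : EuclideanSpace ℝ (Fin n)) := hu
      have hv2 : 0 < w (x : EuclideanSpace ℝ (Fin n)) (v, true) /
          T (x : EuclideanSpace ℝ (Fin n)) := hv
      have hu' : 0 < w (x : EuclideanSpace ℝ (Fin n)) (u, false) := by
        have h1 := mul_pos hu2 hT
        rwa [div_mul_cancel₀ _ (ne_of_gt hT)] at h1
      have hv' : 0 < w (x : EuclideanSpace ℝ (Fin n)) (v, true) := by
        have h1 := mul_pos hv2 hT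
        rwa [div_mul_cancel₀ _ (ne_of_gt hT)] at h1
      rw [hwNfalse] at hu'
      rw [hwNtrue] at hv'
      have hug : ∀ a ∈ (u.1 : Finset α), g a (x : EuclideanSpace ℝ (Fin n)) < 0 := by
        have h1 := (hNpos u (-(x : EuclideanSpace ℝ (Fin n)))).mp hu'
        intro a ha
        have h2 := h1 a ha
        rw [hgneg] at h2
        exact neg_pos.mp h2
      have hvg : ∀ a ∈ (v.1 : Finset α), 0 < g a (x : EuclideanSpace ℝ (Fin n)) :=
        (hNpos v (x : EuclideanSpace ℝ (Fin n))).mp hv'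
      show u ≠ v ∧ Disjoint (u.1 : Finset α) (v.1 : Finset α)
      refine ⟨?_, ?_⟩
      · intro huv
        obtain ⟨a, ha⟩ := hVne u
        have hav : a ∈ (v.1 : Finset α) := by rw [← huv]; exact ha
        exact absurd (hvg a hav) (not_lt.mpr (hug a ha).le)
      · rw [Finset.disjoint_left]
        intro a hau hav
        exact absurd (hvg a hav) (not_lt.mpr (hug a hau).le)
  · intro x
    funext p
    show w (-(x : EuclideanSpace ℝ (Fin n))) p / T (-(x : EuclideanSpace ℝ (Fin n))) =
      w (x : EuclideanSpace ℝ (Fin n)) (p.1, !p.2) / T (x : EuclideanSpace ℝ (Fin n))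
    rw [hwswap, hTswap]
end

section
/- Let p/q be non-integral with ⌈p/q⌉ even, p ≥ 2q. Color vertex i of the rational complete graph K_{p/q} with color ⌊i/q⌋ + 1. This is a proper coloring with ⌈p/q⌉ colors, and there is no complete bipartite subgraph of K_{p/q} containing all even colors on one side and all odd colors on the other side (each color appearing). -/
/-- The rational (circular) complete graph `K_{p/q}`: vertices `{0,…,p-1}`,
with `i ~ j` iff `q ≤ |i - j| ≤ p - q`. -/
def ratK (p q : ℕ) : SimpleGraph (Fin p) where
  Adj i j := i ≠ j ∧ q ≤ ((i : ℤ) - (j : ℤ)).natAbs ∧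
    ((i : ℤ) - (j : ℤ)).natAbs ≤ p - q
  symm := ⟨by
    intro i j ⟨h1, h2, h3⟩
    have habs : ((j : ℤ) - (i : ℤ)).natAbs = ((i : ℤ) - (j : ℤ)).natAbs := by
      rw [show (j : ℤ) - (i : ℤ) = -((i : ℤ) - (j : ℤ)) by ring, Int.natAbs_neg]
    exact ⟨h1.symm, by rw [habs]; exact h2, by rw [habs]; exact h3⟩⟩
  loopless := ⟨fun i hi => hi.1 rfl⟩

/-- For `p/q` non-integral with `⌈p/q⌉` even, the coloring `i ↦ ⌊i/q⌋ + 1` of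
`K_{p/q}` is a proper coloring with `⌈p/q⌉` colors containing no completely
multicolored complete bipartite subgraph with all even colors on one side and
all odd colors on the other. -/
theorem stmt16 (p q t : ℕ) (hq : 0 < q) (hpq : 2 * q ≤ p) (hnd : ¬ q ∣ p)
    (ht : (t : ℤ) = ⌈(p : ℚ) / (q : ℚ)⌉) (hteven : Even t)
    (c : Fin p → ℕ) (hcdef : c = fun i : Fin p => i.val / q + 1) :
    (∀ i j, (ratK p q).Adj i j → c i ≠ c j) ∧
    (Finset.univ.image c = Finset.Icc 1 t) ∧
    ¬ ∃ L M : Finset (Fin p),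
        (∀ u ∈ L, ∀ v ∈ M, (ratK p q).Adj u v) ∧
        L.image c = (Finset.Icc 1 t).filter (fun x => Even x) ∧
        M.image c = (Finset.Icc 1 t).filter (fun x => ¬ Even x) := by
  subst hcdef
  have hq0 : (0:ℚ) < (q:ℚ) := by exact_mod_cast hq
  have hle1 : (p:ℚ)/(q:ℚ) ≤ (t:ℚ) := by
    have h := Int.le_ceil ((p:ℚ)/(q:ℚ))
    rw [← ht] at h
    exact_mod_cast h
  have hple : p ≤ t * q := by
    rw [div_le_iff₀ hq0] at hle1
    exact_mod_cast hle1
  have hlt1 : (t:ℚ) < (p:ℚ)/(q:ℚ) + 1 := by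
    have h := Int.ceil_lt_add_one ((p:ℚ)/(q:ℚ))
    rw [← ht] at h
    exact_mod_cast h
  have htq : t * q < p + q := by
    have h2 : (t:ℚ) * q < ((p:ℚ)/(q:ℚ) + 1) * q := by
      exact mul_lt_mul_of_pos_right hlt1 hq0
    rw [add_mul, div_mul_cancel₀, one_mul] at h2
    · exact_mod_cast h2
    · exact ne_of_gt hq0
  have hplt : p < t * q := lt_of_le_of_ne hple (fun h => hnd ⟨t, by rw [h, Nat.mul_comm]⟩)
  have ht2 : 2 < t := Nat.lt_of_mul_lt_mul_right (lt_of_le_of_lt hpq hplt)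
  have haux : ∀ k : ℕ, 1 ≤ k → (k-1)*q + q = k*q := by
    intro k hk
    rcases k with _|n
    · omega
    · simp [Nat.succ_sub_one, Nat.succ_mul]
  refine ⟨?_, ?_, ?_⟩
  · rintro i j ⟨hne, hge, -⟩ hc
    have hcc : i.val / q + 1 = j.val / q + 1 := hc
    have hdd : i.val / q = j.val / q := by omega
    have e1 := Nat.div_add_mod i.val q
    have e2 := Nat.div_add_mod j.val q
    have m1 := Nat.mod_lt i.val hq
    have m2 := Nat.mod_lt j.val hq
    rw [hdd] at e1
    have hge' : q ≤ ((i.val : ℤ) - (j.val : ℤ)).natAbs := hge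
    omega
  · ext a
    simp only [Finset.mem_image, Finset.mem_univ, true_and, Finset.mem_Icc]
    constructor
    · rintro ⟨i, rfl⟩
      have h1 : i.val < t * q := lt_of_lt_of_le i.isLt hple
      have h2 := (Nat.div_lt_iff_lt_mul hq).mpr h1
      exact ⟨Nat.le_add_left 1 _, Nat.succ_le_of_lt h2⟩
    · rintro ⟨h1, h2⟩
      have hml : (a-1)*q ≤ (t-1)*q := Nat.mul_le_mul_right q (by omega)
      have hax := haux t (by omega)
      have hlt' : (a-1)*q < p := by omega
      refine ⟨⟨(a-1)*q, hlt'⟩, ?_⟩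
      show (a-1)*q / q + 1 = a
      rw [Nat.mul_div_cancel _ hq]
      omega
  · rintro ⟨L, M, hadj, himgL, himgM⟩
    have h1M : (1:ℕ) ∈ M.image (fun i : Fin p => i.val / q + 1) := by
      rw [himgM, Finset.mem_filter, Finset.mem_Icc]
      exact ⟨⟨le_refl 1, by omega⟩, by simp⟩
    obtain ⟨w1, hw1M, hcw1⟩ := Finset.mem_image.mp h1M
    have key : ∀ k : ℕ, 1 ≤ k → k ≤ t →
        ∃ w : Fin p, (if Even k then w ∈ L else w ∈ M) ∧ w.val / q + 1 = k ∧
          w1.val + (k-1)*q ≤ w.val := by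
      intro k hk1
      induction k, hk1 using Nat.le_induction with
      | base =>
        intro _
        refine ⟨w1, ?_, hcw1, by omega⟩
        rw [if_neg (by decide)]
        exact hw1M
      | succ k hk ih =>
        intro hkt
        obtain ⟨w, hwmem, hcw, hwchain⟩ := ih (by omega)
        have hxex : ∃ x : Fin p, (if Even (k+1) then x ∈ L else x ∈ M) ∧
            x.val / q + 1 = k + 1 := by
          by_cases hpar : Even (k+1)
          · have hmem : (k+1) ∈ L.image (fun i : Fin p => i.val / q + 1) := by
              rw [himgL, Finset.mem_filter, Finset.mem_Icc]
              exact ⟨⟨by omega, hkt⟩, hpar⟩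
            obtain ⟨x, hxL, hcx⟩ := Finset.mem_image.mp hmem
            exact ⟨x, by rw [if_pos hpar]; exact hxL, hcx⟩
          · have hmem : (k+1) ∈ M.image (fun i : Fin p => i.val / q + 1) := by
              rw [himgM, Finset.mem_filter, Finset.mem_Icc]
              exact ⟨⟨by omega, hkt⟩, hpar⟩
            obtain ⟨x, hxM, hcx⟩ := Finset.mem_image.mp hmem
            exact ⟨x, by rw [if_neg hpar]; exact hxM, hcx⟩
        obtain ⟨x, hxmem, hcx⟩ := hxex
        have habs : q ≤ ((x.val : ℤ) - (w.val : ℤ)).natAbs := by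
          by_cases hpar : Even (k+1)
          · rw [if_pos hpar] at hxmem
            rw [if_neg (Nat.even_add_one.mp hpar)] at hwmem
            exact (hadj x hxmem w hwmem).2.1
          · rw [if_neg hpar] at hxmem
            rw [if_pos (by rw [Nat.even_add_one] at hpar; exact not_not.mp hpar)] at hwmem
            have h := (hadj w hwmem x hxmem).2.1
            have h' : q ≤ ((w.val : ℤ) - (x.val : ℤ)).natAbs := h
            omega
        have hdd : x.val / q = w.val / q + 1 := by omega
        have e1 := Nat.div_add_mod x.val q
        have e2 := Nat.div_add_mod w.val q
        have m1 := Nat.mod_lt x.val hq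
        have m2 := Nat.mod_lt w.val hq
        rw [hdd, Nat.mul_add, Nat.mul_one] at e1
        have hax := haux k (by omega)
        have hax2 := haux (k+1) (by omega)
        refine ⟨x, hxmem, hcx, ?_⟩
        have hgoal : (k+1) - 1 = k := rfl
        rw [hgoal]
        omega
    obtain ⟨wt, hwtmem, hcwt, hchain⟩ := key t (by omega) le_rfl
    rw [if_pos hteven] at hwtmem
    have adj := hadj wt hwtmem w1 hw1M
    have hub : ((wt.val : ℤ) - (w1.val : ℤ)).natAbs ≤ p - q := adj.2.2
    have hax := haux t (by omega)
    omega
end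

section
/- If F consists of all k-element subsets of an n-element set with k < n/2, then cd_2(F) = n - 2k + 2. -/
open Finset

/-- For the family of all `k`-subsets of an `n`-set with `k < n/2`,
the 2-colorability defect equals `n - 2k + 2`. -/
theorem stmt19 (n k : ℕ) (hk : 1 ≤ k) (hkn : 2 * k < n) :
    cdTwo ((Finset.univ : Finset (Fin n)).powersetCard k) = n - 2 * k + 2 := by
  classical
  have hcardU : (univ : Finset (Fin n)).card = n := by simp
  -- membership: n - 2k + 2 is achievable
  have hmem : (n - 2 * k + 2) ∈ {m | ∃ Y : Finset (Fin n), Y.card = m ∧ ∃ c : Fin n → Fin 2,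
      ∀ F ∈ (Finset.univ : Finset (Fin n)).powersetCard k, Disjoint F Y →
        (∃ a ∈ F, c a = 0) ∧ (∃ b ∈ F, c b = 1)} := by
    obtain ⟨Y, hYsub, hYcard⟩ := Finset.exists_subset_card_eq
      (s := (univ : Finset (Fin n))) (n := n - 2 * k + 2) (by omega)
    have hcompl : (univ \ Y).card = 2 * k - 2 := by
      rw [Finset.card_sdiff_of_subset hYsub, hcardU, hYcard]; omega
    obtain ⟨A, hAsub, hAcard⟩ := Finset.exists_subset_card_eq
      (s := univ \ Y) (n := k - 1) (by omega)
    refine ⟨Y, hYcard, fun a => if a ∈ A then 0 else 1, ?_⟩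
    intro F hF hdisj
    rw [Finset.mem_powersetCard] at hF
    have hFsub : F ⊆ univ \ Y := by
      intro x hx
      simp only [Finset.mem_sdiff, Finset.mem_univ, true_and]
      exact Finset.disjoint_left.mp hdisj hx
    constructor
    · -- some element of F lies in A
      by_contra h
      push_neg at h
      have hFA : F ⊆ (univ \ Y) \ A := by
        intro x hx
        have hxA : x ∉ A := by
          intro hxA
          have := h x hx
          simp [hxA] at this
        exact Finset.mem_sdiff.mpr ⟨hFsub hx, hxA⟩
      have := Finset.card_le_card hFA
      rw [Finset.card_sdiff_of_subset hAsub, hcompl, hAcard, hF.2] at this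
      omega
    · -- some element of F is outside A
      by_contra h
      push_neg at h
      have hFA : F ⊆ A := by
        intro x hx
        by_contra hxA
        have := h x hx
        simp [hxA] at this
      have := Finset.card_le_card hFA
      rw [hAcard, hF.2] at this
      omega
  -- lower bound
  have hlb : ∀ m ∈ {m | ∃ Y : Finset (Fin n), Y.card = m ∧ ∃ c : Fin n → Fin 2,
      ∀ F ∈ (Finset.univ : Finset (Fin n)).powersetCard k, Disjoint F Y →
        (∃ a ∈ F, c a = 0) ∧ (∃ b ∈ F, c b = 1)}, n - 2 * k + 2 ≤ m := by
    rintro m ⟨Y, hYcard, c, hc⟩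
    set A := (univ \ Y).filter (fun a => c a = 0) with hA
    set B := (univ \ Y).filter (fun a => ¬ c a = 0) with hB
    have key : ∀ C : Finset (Fin n), C ⊆ univ \ Y →
        (∀ x ∈ C, ∀ y ∈ C, c x = c y) → C.card ≤ k - 1 := by
      intro C hCsub hmono
      by_contra h
      push_neg at h
      obtain ⟨F, hFsub, hFcard⟩ := Finset.exists_subset_card_eq (s := C) (n := k) (by omega)
      have hFmem : F ∈ (Finset.univ : Finset (Fin n)).powersetCard k :=
        Finset.mem_powersetCard.mpr ⟨Finset.subset_univ F, hFcard⟩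
      have hFdisj : Disjoint F Y := by
        rw [Finset.disjoint_left]
        intro x hx hxY
        have := hCsub (hFsub hx)
        simp [Finset.mem_sdiff] at this
        exact this hxY
      obtain ⟨⟨a, ha, ha0⟩, ⟨b, hb, hb1⟩⟩ := hc F hFmem hFdisj
      have := hmono a (hFsub ha) b (hFsub hb)
      rw [ha0, hb1] at this
      exact absurd this (by decide)
    have hAle : A.card ≤ k - 1 := by
      apply key
      · exact Finset.filter_subset _ _
      · intro x hx y hy
        rw [hA, Finset.mem_filter] at hx hy
        rw [hx.2, hy.2]
    have hBle : B.card ≤ k - 1 := by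
      apply key
      · exact Finset.filter_subset _ _
      · intro x hx y hy
        rw [hB, Finset.mem_filter] at hx hy
        have hx1 : c x = 1 := by
          have := (c x).isLt
          have hne : (c x).val ≠ 0 := fun h0 => hx.2 (Fin.ext h0)
          exact Fin.ext (by omega)
        have hy1 : c y = 1 := by
          have := (c y).isLt
          have hne : (c y).val ≠ 0 := fun h0 => hy.2 (Fin.ext h0)
          exact Fin.ext (by omega)
        rw [hx1, hy1]
    have hunion : A.card + B.card = (univ \ Y).card := by
      rw [hA, hB]
      exact Finset.card_filter_add_card_filter_not _
    have hYle : Y.card ≤ n := by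
      have := Finset.card_le_card (Finset.subset_univ Y)
      rwa [hcardU] at this
    have hsd : (univ \ Y).card = n - Y.card := by
      rw [Finset.card_sdiff_of_subset (Finset.subset_univ Y), hcardU]
    rw [hsd, hYcard] at hunion
    omega
  unfold cdTwo
  exact le_antisymm (Nat.sInf_le hmem) (le_csInf ⟨_, hmem⟩ hlb)
end
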